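/- arXiv:1210.1293 — 8 statements merged into one kernel-verified Lean document; each statement's English description precedes it below -/
import Mathlib

section
/- Let m, n ≥ 4 be even integers, B = [[2cos(π/m), 1], [−1, 0]] and C = [[−2cos(π/n), 1], [−1, 0]] in SL(2,ℝ). Then tr(B^{m/2}) = 0, (B^{m/2})² = −I, tr(C^{n/2}) = 0, (C^{n/2})² = −I, and under the Möbius action both B^{m/2} and C^{n/2} interchange the points 1 and −1 (i.e., B^{m/2}·1 = −1, B^{m/2}·(−1) = 1, C^{n/2}·1 = −1, C^{n/2}·(−1) = 1). -/
open Real Matrix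

/-- Möbius action of a 2×2 real matrix on a real number. -/
noncomputable def moebius (M : Matrix (Fin 2) (Fin 2) ℝ) (z : ℝ) : ℝ :=
  (M 0 0 * z + M 0 1) / (M 1 0 * z + M 1 1)

lemma pow_formula (θ : ℝ) (hs : Real.sin θ ≠ 0) (k : ℕ) :
    (!![2 * Real.cos θ, 1; -1, 0] : Matrix (Fin 2) (Fin 2) ℝ) ^ (k + 1) =
    !![Real.sin (((k : ℝ) + 2) * θ) / Real.sin θ, Real.sin (((k : ℝ) + 1) * θ) / Real.sin θ;
       -(Real.sin (((k : ℝ) + 1) * θ) / Real.sin θ), -(Real.sin ((k : ℝ) * θ) / Real.sin θ)] := by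
  induction k with
  | zero =>
      rw [pow_one]
      ext i j
      fin_cases i <;> fin_cases j <;> simp <;>
        first
        | (rw [Real.sin_two_mul]; field_simp; ring)
        | (field_simp; rw [Real.sin_two_mul]; ring)
        | (field_simp)
  | succ k ih =>
      rw [pow_succ, ih]
      have h3 : Real.sin (((k : ℝ) + 3) * θ)
          = 2 * Real.cos θ * Real.sin (((k : ℝ) + 2) * θ) - Real.sin (((k : ℝ) + 1) * θ) := by
        have e1 : ((k : ℝ) + 3) * θ = ((k : ℝ) + 2) * θ + θ := by ring
        have e2 : ((k : ℝ) + 1) * θ = ((k : ℝ) + 2) * θ - θ := by ring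
        rw [e1, e2, Real.sin_add, Real.sin_sub]; ring
      have h2 : Real.sin (((k : ℝ) + 2) * θ)
          = 2 * Real.cos θ * Real.sin (((k : ℝ) + 1) * θ) - Real.sin ((k : ℝ) * θ) := by
        have e1 : ((k : ℝ) + 2) * θ = ((k : ℝ) + 1) * θ + θ := by ring
        have e2 : ((k : ℝ)) * θ = ((k : ℝ) + 1) * θ - θ := by ring
        rw [e1, e2, Real.sin_add, Real.sin_sub]; ring
      ext i j
      fin_cases i <;> fin_cases j <;>
        simp [Matrix.mul_apply, Fin.sum_univ_succ] <;> push_cast <;> field_simp <;>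
        ring_nf <;> ring_nf at h3 h2 <;>
        first
        | linear_combination (-2 : ℝ) * h3 + (-2 * Real.cos θ) * h2
        | linear_combination (Real.sin θ ^ 2 - 1) * h2
        | linear_combination h2
        | linear_combination (-(Real.sin θ ^ 2)) * h2
        | linear_combination -h3
        | linear_combination Real.sin θ ^ 2 * h2
        | skip

lemma key (θ : ℝ) (k : ℕ) (hk : 1 ≤ k) (hs : 0 < Real.sin θ)
    (h1 : Real.cos θ < 1) (h2 : -1 < Real.cos θ)
    (hck : Real.cos ((k : ℝ) * θ) = 0) :
    Matrix.trace ((!![2 * Real.cos θ, 1; -1, 0] : Matrix (Fin 2) (Fin 2) ℝ) ^ k) = 0 ∧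
    ((!![2 * Real.cos θ, 1; -1, 0] : Matrix (Fin 2) (Fin 2) ℝ) ^ k) ^ 2 = -1 ∧
    moebius ((!![2 * Real.cos θ, 1; -1, 0] : Matrix (Fin 2) (Fin 2) ℝ) ^ k) 1 = -1 ∧
    moebius ((!![2 * Real.cos θ, 1; -1, 0] : Matrix (Fin 2) (Fin 2) ℝ) ^ k) (-1) = 1 := by
  obtain ⟨j, rfl⟩ := Nat.exists_eq_add_of_le hk
  have hs' : Real.sin θ ≠ 0 := ne_of_gt hs
  obtain ⟨c, hc⟩ : ∃ x : ℝ, x = Real.sin ((j : ℝ) * θ + θ) := ⟨_, rfl⟩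
  have hkc : ((1 + j : ℕ) : ℝ) * θ = (j : ℝ) * θ + θ := by push_cast; ring
  rw [hkc] at hck
  have hc2 : c ^ 2 = 1 := by
    have := Real.sin_sq_add_cos_sq ((j : ℝ) * θ + θ)
    rw [hck] at this; simpa [hc] using this
  have hcne : c ≠ 0 := by intro h; rw [h] at hc2; norm_num at hc2
  have hsin2 : Real.sin (((j : ℝ) + 2) * θ) = c * Real.cos θ := by
    have e : ((j : ℝ) + 2) * θ = ((j : ℝ) * θ + θ) + θ := by ring
    rw [e, Real.sin_add, hck, hc]; ring
  have hsin0 : Real.sin ((j : ℝ) * θ) = c * Real.cos θ := by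
    have e : ((j : ℝ)) * θ = ((j : ℝ) * θ + θ) - θ := by ring
    rw [e, Real.sin_sub, hck, hc]; ring
  have hsin1 : Real.sin (((j : ℝ) + 1) * θ) = c := by
    rw [hc]; ring_nf
  have hP : (!![2 * Real.cos θ, 1; -1, 0] : Matrix (Fin 2) (Fin 2) ℝ) ^ (1 + j) =
      !![c * Real.cos θ / Real.sin θ, c / Real.sin θ;
         -(c / Real.sin θ), -(c * Real.cos θ / Real.sin θ)] := by
    rw [Nat.add_comm 1 j, pow_formula θ hs' j, hsin2, hsin1, hsin0]
  rw [hP]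
  have hpyth := Real.sin_sq_add_cos_sq θ
  refine ⟨?_, ?_, ?_, ?_⟩
  · simp [Matrix.trace_fin_two]
  · ext i jj
    fin_cases i <;> fin_cases jj <;>
      simp [pow_two, Matrix.mul_apply, Fin.sum_univ_succ] <;> field_simp
    · linear_combination (Real.cos θ ^ 2 - 1) * hc2 + hpyth
    · ring
    · ring
    · linear_combination (Real.cos θ ^ 2 - 1) * hc2 + hpyth
  · simp only [moebius, Matrix.cons_val_zero, Matrix.cons_val_one, Matrix.head_cons,
      Matrix.cons_val', Matrix.empty_val', Matrix.cons_val_fin_one, Matrix.head_fin_const,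
      Matrix.of_apply, Matrix.cons_val_zero]
    have hd : -(c / Real.sin θ) * 1 + -(c * Real.cos θ / Real.sin θ)
        = -(c * (1 + Real.cos θ)) / Real.sin θ := by ring
    rw [hd, div_eq_iff]
    · ring
    · exact div_ne_zero (neg_ne_zero.mpr (mul_ne_zero hcne (by linarith))) hs'
  · simp only [moebius, Matrix.cons_val_zero, Matrix.cons_val_one, Matrix.head_cons,
      Matrix.cons_val', Matrix.empty_val', Matrix.cons_val_fin_one, Matrix.head_fin_const,
      Matrix.of_apply, Matrix.cons_val_zero]
    have hd : -(c / Real.sin θ) * (-1) + -(c * Real.cos θ / Real.sin θ)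
        = (c * (1 - Real.cos θ)) / Real.sin θ := by ring
    rw [hd, div_eq_iff]
    · ring
    · exact div_ne_zero (mul_ne_zero hcne (by linarith)) hs'

theorem stmt2 (m n : ℕ) (hm : 4 ≤ m) (hn : 4 ≤ n) (hme : Even m) (hne : Even n)
    (B C : Matrix.SpecialLinearGroup (Fin 2) ℝ)
    (hB : (B : Matrix (Fin 2) (Fin 2) ℝ) =
      !![2 * Real.cos (Real.pi / (m : ℝ)), 1; -1, 0])
    (hC : (C : Matrix (Fin 2) (Fin 2) ℝ) =
      !![-(2 * Real.cos (Real.pi / (n : ℝ))), 1; -1, 0]) :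
    Matrix.trace ((B ^ (m / 2) : Matrix.SpecialLinearGroup (Fin 2) ℝ) :
        Matrix (Fin 2) (Fin 2) ℝ) = 0 ∧
    (((B ^ (m / 2) : Matrix.SpecialLinearGroup (Fin 2) ℝ) :
        Matrix (Fin 2) (Fin 2) ℝ)) ^ 2 = -1 ∧
    Matrix.trace ((C ^ (n / 2) : Matrix.SpecialLinearGroup (Fin 2) ℝ) :
        Matrix (Fin 2) (Fin 2) ℝ) = 0 ∧
    (((C ^ (n / 2) : Matrix.SpecialLinearGroup (Fin 2) ℝ) :
        Matrix (Fin 2) (Fin 2) ℝ)) ^ 2 = -1 ∧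
    moebius ((B ^ (m / 2) : Matrix.SpecialLinearGroup (Fin 2) ℝ) :
        Matrix (Fin 2) (Fin 2) ℝ) 1 = -1 ∧
    moebius ((B ^ (m / 2) : Matrix.SpecialLinearGroup (Fin 2) ℝ) :
        Matrix (Fin 2) (Fin 2) ℝ) (-1) = 1 ∧
    moebius ((C ^ (n / 2) : Matrix.SpecialLinearGroup (Fin 2) ℝ) :
        Matrix (Fin 2) (Fin 2) ℝ) 1 = -1 ∧
    moebius ((C ^ (n / 2) : Matrix.SpecialLinearGroup (Fin 2) ℝ) :
        Matrix (Fin 2) (Fin 2) ℝ) (-1) = 1 := by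
  obtain ⟨j, hj⟩ := hme
  obtain ⟨l, hl⟩ := hne
  have hj2 : 2 ≤ j := by omega
  have hl2 : 2 ≤ l := by omega
  have hmj : m / 2 = j := by omega
  have hnl : n / 2 = l := by omega
  have hmr : (m : ℝ) = 2 * j := by rw [hj]; push_cast; ring
  have hnr : (n : ℝ) = 2 * l := by rw [hl]; push_cast; ring
  have hjr : (0 : ℝ) < (j : ℝ) := by positivity
  have hlr : (0 : ℝ) < (l : ℝ) := by
    have : (0 : ℕ) < l := by omega
    exact_mod_cast this
  -- angle for B
  have hθB1 : 0 < Real.pi / (m : ℝ) := by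
    apply div_pos Real.pi_pos; rw [hmr]; positivity
  have hθB2 : Real.pi / (m : ℝ) < Real.pi :=
    div_lt_self Real.pi_pos (by exact_mod_cast (by omega : 1 < m))
  have hsB : 0 < Real.sin (Real.pi / (m : ℝ)) :=
    Real.sin_pos_of_pos_of_lt_pi hθB1 hθB2
  have pythB := Real.sin_sq_add_cos_sq (Real.pi / (m : ℝ))
  have h1B : Real.cos (Real.pi / (m : ℝ)) < 1 := by nlinarith [mul_pos hsB hsB]
  have h2B : -1 < Real.cos (Real.pi / (m : ℝ)) := by nlinarith [mul_pos hsB hsB]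
  have hckB : Real.cos ((↑(m / 2) : ℝ) * (Real.pi / (m : ℝ))) = 0 := by
    rw [hmj]
    have : (j : ℝ) * (Real.pi / (m : ℝ)) = Real.pi / 2 := by
      rw [hmr]; field_simp
    rw [this, Real.cos_pi_div_two]
  have keyB := key (Real.pi / (m : ℝ)) (m / 2) (by omega) hsB h1B h2B hckB
  rw [← hB] at keyB
  rw [← Matrix.SpecialLinearGroup.coe_pow] at keyB
  -- angle for C
  have hθC0 : 0 < Real.pi / (n : ℝ) := by
    apply div_pos Real.pi_pos; rw [hnr]; positivity
  have hθC0' : Real.pi / (n : ℝ) < Real.pi :=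
    div_lt_self Real.pi_pos (by exact_mod_cast (by omega : 1 < n))
  have hsC : 0 < Real.sin (Real.pi - Real.pi / (n : ℝ)) := by
    rw [Real.sin_pi_sub]
    exact Real.sin_pos_of_pos_of_lt_pi hθC0 hθC0'
  have h1C : Real.cos (Real.pi - Real.pi / (n : ℝ)) < 1 := by
    nlinarith [mul_pos hsC hsC, Real.sin_sq_add_cos_sq (Real.pi - Real.pi / (n : ℝ))]
  have h2C : -1 < Real.cos (Real.pi - Real.pi / (n : ℝ)) := by
    nlinarith [mul_pos hsC hsC, Real.sin_sq_add_cos_sq (Real.pi - Real.pi / (n : ℝ))]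
  have hckC : Real.cos ((↑(n / 2) : ℝ) * (Real.pi - Real.pi / (n : ℝ))) = 0 := by
    rw [hnl]
    have e : (l : ℝ) * (Real.pi - Real.pi / (n : ℝ)) = (l : ℝ) * Real.pi - Real.pi / 2 := by
      rw [hnr]; field_simp
    rw [e, Real.cos_sub, Real.cos_pi_div_two, Real.sin_pi_div_two,
      Real.sin_nat_mul_pi]
    ring
  have keyC := key (Real.pi - Real.pi / (n : ℝ)) (n / 2) (by omega) hsC h1C h2C hckC
  have hC' : (C : Matrix (Fin 2) (Fin 2) ℝ) =
      !![2 * Real.cos (Real.pi - Real.pi / (n : ℝ)), 1; -1, 0] := by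
    rw [hC, Real.cos_pi_sub]; ring_nf
  rw [← hC'] at keyC
  rw [← Matrix.SpecialLinearGroup.coe_pow] at keyC
  exact ⟨keyB.1, keyB.2.1, keyC.1, keyC.2.1, keyB.2.2.1, keyB.2.2.2, keyC.2.2.1, keyC.2.2.2⟩
end

section
/- Let m, n ≥ 4 be even integers, B = [[2cos(π/m), 1], [−1, 0]] and C = [[−2cos(π/n), 1], [−1, 0]] in SL(2,ℝ), and set H = B^{m/2}·C^{n/2}. Then |tr H| = 2(1 + cos(π/m)cos(π/n))/(sin(π/m)sin(π/n)) > 2 (so H is hyperbolic), and H fixes both 1 and −1 under the Möbius action: H·1 = 1 and H·(−1) = −1. -/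
open Real Matrix

lemma chebpow (θ : ℝ) (k : ℕ) :
    Real.sin θ • ((!![2*Real.cos θ,1;-1,0] : Matrix (Fin 2) (Fin 2) ℝ) ^ k) =
      !![Real.sin (((k:ℝ)+1)*θ), Real.sin ((k:ℝ)*θ);
         -Real.sin ((k:ℝ)*θ), -Real.sin (((k:ℝ)-1)*θ)] := by
  induction k with
  | zero =>
    ext i j
    fin_cases i <;> fin_cases j <;>
      simp [Matrix.one_fin_two, Real.sin_neg]
  | succ k ih =>
    rw [pow_succ, ← smul_mul_assoc, ih, Matrix.mul_fin_two]
    have e2 : ((k:ℝ)+1+1)*θ = (k:ℝ)*θ + θ + θ := by ring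
    have e1 : ((k:ℝ)+1)*θ = (k:ℝ)*θ + θ := by ring
    have em : ((k:ℝ)+1-1)*θ = (k:ℝ)*θ := by ring
    have em1 : ((k:ℝ)-1)*θ = (k:ℝ)*θ - θ := by ring
    push_cast
    rw [e2, e1, em, em1]
    ext i j
    fin_cases i <;> fin_cases j <;>
      simp [Real.sin_add, Real.sin_sub, Real.cos_add, Real.cos_sub]
    all_goals try linear_combination (Real.sin ((k:ℝ)*θ)) * (Real.sin_sq_add_cos_sq θ)
    all_goals ring

lemma moeb1 (r x y : ℝ) (h : r*y + r*x ≠ 0) : moebius (r • !![x, y; y, x]) 1 = 1 := by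
  unfold moebius
  have e00 : (r • !![x, y; y, x]) 0 0 = r * x := by simp
  have e01 : (r • !![x, y; y, x]) 0 1 = r * y := by simp
  have e10 : (r • !![x, y; y, x]) 1 0 = r * y := by simp
  have e11 : (r • !![x, y; y, x]) 1 1 = r * x := by simp
  rw [e00, e01, e10, e11, mul_one, mul_one,
    show r*x + r*y = r*y + r*x by ring]
  exact div_self h

lemma moeb2 (r x y : ℝ) (h : r*y - r*x ≠ 0) : moebius (r • !![x, y; y, x]) (-1) = -1 := by
  unfold moebius
  have e00 : (r • !![x, y; y, x]) 0 0 = r * x := by simp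
  have e01 : (r • !![x, y; y, x]) 0 1 = r * y := by simp
  have e10 : (r • !![x, y; y, x]) 1 0 = r * y := by simp
  have e11 : (r • !![x, y; y, x]) 1 1 = r * x := by simp
  rw [e00, e01, e10, e11,
    show r*x*(-1) + r*y = r*y - r*x by ring, show r*y*(-1) + r*x = -(r*y - r*x) by ring,
    div_neg, div_self h]

set_option maxHeartbeats 1000000 in
theorem stmt3 (m n : ℕ) (hm : 4 ≤ m) (hn : 4 ≤ n) (hme : Even m) (hne : Even n)
    (B C : Matrix.SpecialLinearGroup (Fin 2) ℝ)
    (hB : (B : Matrix (Fin 2) (Fin 2) ℝ) =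
      !![2 * Real.cos (Real.pi / (m : ℝ)), 1; -1, 0])
    (hC : (C : Matrix (Fin 2) (Fin 2) ℝ) =
      !![-(2 * Real.cos (Real.pi / (n : ℝ))), 1; -1, 0])
    (H : Matrix.SpecialLinearGroup (Fin 2) ℝ) (hH : H = B ^ (m / 2) * C ^ (n / 2)) :
    |Matrix.trace ((H : Matrix (Fin 2) (Fin 2) ℝ))| =
        2 * (1 + Real.cos (Real.pi / (m : ℝ)) * Real.cos (Real.pi / (n : ℝ))) /
          (Real.sin (Real.pi / (m : ℝ)) * Real.sin (Real.pi / (n : ℝ))) ∧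
    2 < |Matrix.trace ((H : Matrix (Fin 2) (Fin 2) ℝ))| ∧
    moebius (H : Matrix (Fin 2) (Fin 2) ℝ) 1 = 1 ∧
    moebius (H : Matrix (Fin 2) (Fin 2) ℝ) (-1) = -1 := by
  obtain ⟨j, hj⟩ := hme
  obtain ⟨j', hj'⟩ := hne
  have hjm : m = 2 * j := by omega
  have hjn : n = 2 * j' := by omega
  have hj2 : 2 ≤ j := by omega
  have hj'2 : 2 ≤ j' := by omega
  set α := Real.pi / (m : ℝ) with hα
  set β := Real.pi / (n : ℝ) with hβ
  set c1 := Real.cos α with hc1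
  set c2 := Real.cos β with hc2
  set s1 := Real.sin α with hs1
  set s2 := Real.sin β with hs2
  have hmR : (4:ℝ) ≤ (m:ℝ) := by exact_mod_cast hm
  have hnR : (4:ℝ) ≤ (n:ℝ) := by exact_mod_cast hn
  have hpi := Real.pi_pos
  have hα0 : 0 < α := div_pos hpi (by linarith)
  have hβ0 : 0 < β := div_pos hpi (by linarith)
  have hα4 : α ≤ Real.pi / 4 := by
    rw [hα, div_le_div_iff₀ (by linarith) (by norm_num)]
    nlinarith
  have hβ4 : β ≤ Real.pi / 4 := by
    rw [hβ, div_le_div_iff₀ (by linarith) (by norm_num)]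
    nlinarith
  have hs1pos : 0 < s1 := Real.sin_pos_of_pos_of_lt_pi hα0 (by linarith)
  have hs2pos : 0 < s2 := Real.sin_pos_of_pos_of_lt_pi hβ0 (by linarith)
  have hc1pos : 0 < c1 := Real.cos_pos_of_mem_Ioo ⟨by linarith, by linarith⟩
  have hc2pos : 0 < c2 := Real.cos_pos_of_mem_Ioo ⟨by linarith, by linarith⟩
  have hc1lt : c1 < 1 := by
    have := Real.cos_lt_cos_of_nonneg_of_le_pi (le_refl 0) (by linarith : α ≤ Real.pi) hα0
    simpa using this
  have hc2lt : c2 < 1 := by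
    have := Real.cos_lt_cos_of_nonneg_of_le_pi (le_refl 0) (by linarith : β ≤ Real.pi) hβ0
    simpa using this
  -- B^(m/2)
  have hmdiv : m / 2 = j := by omega
  have hndiv : n / 2 = j' := by omega
  have hjR : (0:ℝ) < (j:ℝ) := by
    have : 0 < j := by omega
    exact_mod_cast this
  have hj'R : (0:ℝ) < (j':ℝ) := by
    have : 0 < j' := by omega
    exact_mod_cast this
  have hkα : ((j:ℝ)) * α = Real.pi / 2 := by
    rw [hα, hjm]
    push_cast
    field_simp
  have hB1 : s1 • ((B : Matrix (Fin 2) (Fin 2) ℝ) ^ (m/2)) = !![c1, 1; -1, -c1] := by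
    rw [hB, hmdiv, chebpow α j]
    have e1 : ((j:ℝ)+1)*α = Real.pi/2 + α := by rw [add_mul, one_mul, hkα]
    have e2 : ((j:ℝ)-1)*α = Real.pi/2 - α := by rw [sub_mul, one_mul, hkα]
    rw [e1, e2, hkα]
    ext i jj
    fin_cases i <;> fin_cases jj <;>
      simp [Real.sin_add, Real.sin_pi_div_two_sub] <;> exact hc1.symm
  -- C^(n/2)
  set θ' := Real.pi - β with hθ'
  have hCθ : (C : Matrix (Fin 2) (Fin 2) ℝ) = !![2 * Real.cos θ', 1; -1, 0] := by
    rw [hC, hθ', Real.cos_pi_sub]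
    norm_num
    exact hc2
  have hkθ : ((j':ℝ)) * θ' = (j':ℝ) * Real.pi - Real.pi / 2 := by
    rw [hθ', hβ, hjn]
    push_cast
    field_simp
  have hcos0 : Real.cos (((j':ℝ)) * θ') = 0 := by
    rw [hkθ, Real.cos_sub]
    simp [Real.sin_nat_mul_pi, Real.cos_nat_mul_two_pi]
  set ε := Real.sin (((j':ℝ)) * θ') with hε
  have hε2 : ε ^ 2 = 1 := by
    have h := Real.sin_sq_add_cos_sq (((j':ℝ)) * θ')
    rw [hcos0] at h
    rw [hε]; linarith [h]
  have hεcases : ε = 1 ∨ ε = -1 := by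
    have h : (ε - 1) * (ε + 1) = 0 := by nlinarith
    rcases mul_eq_zero.mp h with h | h
    · left; linarith
    · right; linarith
  have hεne : ε ≠ 0 := by rcases hεcases with h | h <;> rw [h] <;> norm_num
  have hC1 : s2 • ((C : Matrix (Fin 2) (Fin 2) ℝ) ^ (n/2)) = ε • !![-c2, 1; -1, c2] := by
    have hsθ : Real.sin θ' = s2 := by rw [hθ', Real.sin_pi_sub, hs2]
    rw [hCθ, hndiv, ← hsθ, chebpow θ' j']
    have e1 : ((j':ℝ)+1)*θ' = (j':ℝ)*θ' + θ' := by ring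
    have e2 : ((j':ℝ)-1)*θ' = (j':ℝ)*θ' - θ' := by ring
    have hcθ : Real.cos θ' = -c2 := by rw [hθ', Real.cos_pi_sub, hc2]
    ext i jj
    fin_cases i <;> fin_cases jj <;>
      simp [e1, e2, Real.sin_add, Real.sin_sub, hcos0, hcθ, ← hε] <;> ring
  -- combine
  set P : Matrix (Fin 2) (Fin 2) ℝ := !![-(1+c1*c2), c1+c2; c1+c2, -(1+c1*c2)] with hP
  have hHm : (s1*s2) • (H : Matrix (Fin 2) (Fin 2) ℝ) = ε • P := by
    have hco : (H : Matrix (Fin 2) (Fin 2) ℝ) =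
        ((B : Matrix (Fin 2) (Fin 2) ℝ) ^ (m/2)) * ((C : Matrix (Fin 2) (Fin 2) ℝ) ^ (n/2)) := by
      rw [hH]
      simp
    rw [hco, show (s1*s2) • (((B : Matrix (Fin 2) (Fin 2) ℝ) ^ (m/2)) * ((C : Matrix (Fin 2) (Fin 2) ℝ) ^ (n/2)))
        = (s1 • ((B : Matrix (Fin 2) (Fin 2) ℝ) ^ (m/2))) * (s2 • ((C : Matrix (Fin 2) (Fin 2) ℝ) ^ (n/2))) by
      rw [smul_mul_assoc, mul_smul_comm, smul_smul]]
    rw [hB1, hC1, mul_smul_comm, hP]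
    congr 1
    rw [Matrix.mul_fin_two]
    ext i jj
    fin_cases i <;> fin_cases jj <;> simp <;> ring
  have hs12 : (0:ℝ) < s1 * s2 := mul_pos hs1pos hs2pos
  have hs12ne : s1 * s2 ≠ 0 := ne_of_gt hs12
  set r := (s1*s2)⁻¹ * ε with hr
  have hrne : r ≠ 0 := mul_ne_zero (inv_ne_zero hs12ne) hεne
  have hHmat : (H : Matrix (Fin 2) (Fin 2) ℝ) = r • P := by
    have h2 := congrArg (fun M => (s1*s2)⁻¹ • M) hHm
    simp only [smul_smul] at h2
    rw [inv_mul_cancel₀ hs12ne, one_smul] at h2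
    rw [h2, hr]
  have htr : Matrix.trace (H : Matrix (Fin 2) (Fin 2) ℝ) = r * (-(2*(1+c1*c2))) := by
    rw [hHmat, Matrix.trace_smul, hP, Matrix.trace_fin_two]
    simp [smul_eq_mul]
    ring
  have hpos : 0 < 1 + c1*c2 := by nlinarith
  have habs : |Matrix.trace ((H : Matrix (Fin 2) (Fin 2) ℝ))| = 2 * (1 + c1*c2) / (s1*s2) := by
    rw [htr, hr]
    have hinv : (0:ℝ) < (s1*s2)⁻¹ := inv_pos.mpr hs12
    rcases hεcases with h | h <;> rw [h]
    · have hneg : (s1*s2)⁻¹ * 1 * (-(2*(1+c1*c2))) < 0 := by nlinarith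
      rw [abs_of_neg hneg]
      field_simp
    · have hposx : 0 < (s1*s2)⁻¹ * (-1) * (-(2*(1+c1*c2))) := by nlinarith
      rw [abs_of_pos hposx]
      field_simp
  have hlt : 2 < 2 * (1 + c1*c2) / (s1*s2) := by
    rw [lt_div_iff₀ hs12]
    have hcosab : 0 ≤ Real.cos (α + β) :=
      Real.cos_nonneg_of_mem_Icc ⟨by linarith, by linarith⟩
    rw [Real.cos_add] at hcosab
    nlinarith
  refine ⟨habs, habs ▸ hlt, ?_, ?_⟩
  · rw [hHmat, hP]
    apply moeb1
    rw [show r*(c1+c2) + r*(-(1+c1*c2)) = -r*((1-c1)*(1-c2)) by ring]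
    exact mul_ne_zero (neg_ne_zero.mpr hrne) (by nlinarith)
  · rw [hHmat, hP]
    apply moeb2
    rw [show r*(c1+c2) - r*(-(1+c1*c2)) = r*((1+c1)*(1+c2)) by ring]
    exact mul_ne_zero hrne (by nlinarith)
end

section
/- Let m, n ≥ 4 be even integers, B = [[2cos(π/m), 1], [−1, 0]] and C = [[−2cos(π/n), 1], [−1, 0]] in SL(2,ℝ). Set λ = (cos(π/m)cos(π/n) + cos(π/m) + cos(π/n) + 1)/(sin(π/m)sin(π/n)). Then λ > 1 and the eigenvalues of the matrix (−1)^{n/2}·B^{m/2}·C^{n/2} are exactly λ and λ^{−1}. -/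
open Real Matrix

lemma powB (θ : ℝ) (hs : Real.sin θ ≠ 0) (k : ℕ) :
    (!![2 * Real.cos θ, 1; -1, 0] : Matrix (Fin 2) (Fin 2) ℝ) ^ k =
      (Real.sin θ)⁻¹ •
        !![Real.sin ((k + 1) * θ), Real.sin (k * θ);
           -Real.sin (k * θ), Real.sin ((k + 1) * θ) - 2 * Real.cos θ * Real.sin (k * θ)] := by
  induction k with
  | zero =>
      ext i j
      fin_cases i <;> fin_cases j <;>
        simp [Matrix.one_apply] <;> field_simp
  | succ k ih =>
      rw [pow_succ, ih, Matrix.smul_mul]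
      congr 1
      have h1 : ((k : ℝ) + 1 + 1) * θ = (k * θ + θ) + θ := by ring
      have h2 : ((k : ℝ) + 1) * θ = k * θ + θ := by ring
      push_cast
      rw [h1, h2]
      ext i j
      fin_cases i <;> fin_cases j
      all_goals simp [Matrix.mul_apply, Fin.sum_univ_two, Real.sin_add, Real.cos_add]
      all_goals first
        | ring1
        | linear_combination Real.sin ((k:ℝ) * θ) * (Real.sin_sq_add_cos_sq θ)

lemma spectrum_fin_two (a b : ℝ) (lam mu : ℝ) (hsum : a + b = lam) (hdiff : a - b = mu) :
    spectrum ℝ (!![a, -b; -b, a] : Matrix (Fin 2) (Fin 2) ℝ) = {lam, mu} := by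
  ext x
  have halg : (algebraMap ℝ (Matrix (Fin 2) (Fin 2) ℝ)) x - !![a, -b; -b, a]
      = !![x - a, b; b, x - a] := by
    ext i j
    fin_cases i <;> fin_cases j <;>
      simp [Matrix.algebraMap_eq_diagonal, Matrix.diagonal, Matrix.sub_apply]
  have hfac : (x - a) * (x - a) - b * b = (x - lam) * (x - mu) := by
    rw [← hsum, ← hdiff]; ring
  rw [spectrum.mem_iff, halg, Matrix.isUnit_iff_isUnit_det, Matrix.det_fin_two_of,
    isUnit_iff_ne_zero, not_ne_iff, hfac, mul_eq_zero, sub_eq_zero, sub_eq_zero]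
  simp [Set.mem_insert_iff]

set_option maxHeartbeats 1000000 in
theorem stmt4 (m n : ℕ) (hm : 4 ≤ m) (hn : 4 ≤ n) (hme : Even m) (hne : Even n)
    (B C : Matrix.SpecialLinearGroup (Fin 2) ℝ)
    (hB : (B : Matrix (Fin 2) (Fin 2) ℝ) =
      !![2 * Real.cos (Real.pi / (m : ℝ)), 1; -1, 0])
    (hC : (C : Matrix (Fin 2) (Fin 2) ℝ) =
      !![-(2 * Real.cos (Real.pi / (n : ℝ))), 1; -1, 0])
    (lam : ℝ)
    (hlam : lam = (Real.cos (Real.pi / (m : ℝ)) * Real.cos (Real.pi / (n : ℝ))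
        + Real.cos (Real.pi / (m : ℝ)) + Real.cos (Real.pi / (n : ℝ)) + 1) /
        (Real.sin (Real.pi / (m : ℝ)) * Real.sin (Real.pi / (n : ℝ)))) :
    1 < lam ∧
    spectrum ℝ (((-1 : ℝ) ^ (n / 2)) •
        ((B ^ (m / 2) * C ^ (n / 2) : Matrix.SpecialLinearGroup (Fin 2) ℝ) :
          Matrix (Fin 2) (Fin 2) ℝ)) = {lam, lam⁻¹} := by
  have hπ := Real.pi_pos
  set θ := Real.pi / (m : ℝ) with hθdef
  set φ := Real.pi / (n : ℝ) with hφdef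
  have hm0 : (0:ℝ) < m := by positivity
  have hn0 : (0:ℝ) < n := by positivity
  have hm4 : (4:ℝ) ≤ m := by exact_mod_cast hm
  have hn4 : (4:ℝ) ≤ n := by exact_mod_cast hn
  have hθpos : 0 < θ := by positivity
  have hθlt : θ < Real.pi / 2 := by
    rw [hθdef, div_lt_div_iff₀ hm0 (by norm_num)]; nlinarith
  have hφpos : 0 < φ := by positivity
  have hφlt : φ < Real.pi / 2 := by
    rw [hφdef, div_lt_div_iff₀ hn0 (by norm_num)]; nlinarith
  have hsθ : 0 < Real.sin θ := Real.sin_pos_of_pos_of_lt_pi hθpos (by linarith)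
  have hsφ : 0 < Real.sin φ := Real.sin_pos_of_pos_of_lt_pi hφpos (by linarith)
  have hcθ : 0 < Real.cos θ := Real.cos_pos_of_mem_Ioo ⟨by linarith, hθlt⟩
  have hcφ : 0 < Real.cos φ := Real.cos_pos_of_mem_Ioo ⟨by linarith, hφlt⟩
  have hsθ1 : Real.sin θ ≤ 1 := Real.sin_le_one θ
  have hsφ1 : Real.sin φ ≤ 1 := Real.sin_le_one φ
  -- key cast facts
  have hkθ : ((m / 2 : ℕ) : ℝ) * θ = Real.pi / 2 := by
    rw [Nat.cast_div hme.two_dvd (by norm_num), hθdef]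
    field_simp
    ring
  have hlφ : ((n / 2 : ℕ) : ℝ) * φ = Real.pi / 2 := by
    rw [Nat.cast_div hne.two_dvd (by norm_num), hφdef]
    field_simp
    ring
  -- B power
  have hBk : ((B ^ (m / 2) : Matrix.SpecialLinearGroup (Fin 2) ℝ) : Matrix (Fin 2) (Fin 2) ℝ)
      = (Real.sin θ)⁻¹ • !![Real.cos θ, 1; -1, -Real.cos θ] := by
    rw [Matrix.SpecialLinearGroup.coe_pow, hB, powB θ hsθ.ne']
    congr 1
    rw [show (((m / 2 : ℕ) : ℝ) + 1) * θ = Real.pi / 2 + θ by rw [add_mul, one_mul, hkθ], hkθ,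
      Real.sin_add, Real.sin_pi_div_two, Real.cos_pi_div_two]
    norm_num
    ring
  -- C power
  have hCφ : (C : Matrix (Fin 2) (Fin 2) ℝ) = !![2 * Real.cos (Real.pi - φ), 1; -1, 0] := by
    rw [hC, Real.cos_pi_sub]; norm_num
  have hsπφ : Real.sin (Real.pi - φ) ≠ 0 := by rw [Real.sin_pi_sub]; exact hsφ.ne'
  have hCl : ((C ^ (n / 2) : Matrix.SpecialLinearGroup (Fin 2) ℝ) : Matrix (Fin 2) (Fin 2) ℝ)
      = ((-1 : ℝ) ^ (n / 2) * (Real.sin φ)⁻¹) • !![Real.cos φ, -1; 1, -Real.cos φ] := by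
    rw [Matrix.SpecialLinearGroup.coe_pow, hCφ, powB (Real.pi - φ) hsπφ]
    have e1 : ((n / 2 : ℕ) : ℝ) * (Real.pi - φ) = ((n / 2 : ℕ) : ℝ) * Real.pi - Real.pi / 2 := by
      rw [mul_sub, hlφ]
    have e2 : (((n / 2 : ℕ) : ℝ) + 1) * (Real.pi - φ)
        = (((n / 2 + 1 : ℕ)) : ℝ) * Real.pi - (Real.pi / 2 + φ) := by
      push_cast
      have : ((n / 2 : ℕ) : ℝ) * φ + φ = Real.pi / 2 + φ := by rw [hlφ]
      nlinarith [this]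
    rw [e1, e2]
    have s1 : Real.sin (((n / 2 : ℕ) : ℝ) * Real.pi - Real.pi / 2)
        = -((-1 : ℝ) ^ (n / 2)) := by
      rw [Real.sin_nat_mul_pi_sub, Real.sin_pi_div_two, mul_one]
    have s2 : Real.sin ((((n / 2 + 1 : ℕ)) : ℝ) * Real.pi - (Real.pi / 2 + φ))
        = (-1 : ℝ) ^ (n / 2) * Real.cos φ := by
      rw [Real.sin_nat_mul_pi_sub, Real.sin_add, Real.sin_pi_div_two, Real.cos_pi_div_two,
        pow_succ]
      ring
    rw [s1, s2, Real.sin_pi_sub, Real.cos_pi_sub]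
    ext i j
    fin_cases i <;> fin_cases j <;> simp <;> ring
  have h1 : (-1 : ℝ) ^ (n / 2) * (-1 : ℝ) ^ (n / 2) = 1 := by
    rw [← pow_add, ← two_mul, pow_mul, neg_one_sq, one_pow]
  have hN : (((-1 : ℝ) ^ (n / 2)) •
        ((B ^ (m / 2) * C ^ (n / 2) : Matrix.SpecialLinearGroup (Fin 2) ℝ) :
          Matrix (Fin 2) (Fin 2) ℝ)) =
      !![(Real.cos θ * Real.cos φ + 1) / (Real.sin θ * Real.sin φ),
         -((Real.cos θ + Real.cos φ) / (Real.sin θ * Real.sin φ));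
         -((Real.cos θ + Real.cos φ) / (Real.sin θ * Real.sin φ)),
         (Real.cos θ * Real.cos φ + 1) / (Real.sin θ * Real.sin φ)] := by
    rw [Matrix.SpecialLinearGroup.coe_mul, hBk, hCl, Matrix.smul_mul, Matrix.mul_smul,
      smul_smul, smul_smul]
    rw [show (-1 : ℝ) ^ (n / 2) * (sin θ)⁻¹ * ((-1 : ℝ) ^ (n / 2) * (sin φ)⁻¹)
        = ((-1 : ℝ) ^ (n / 2) * (-1 : ℝ) ^ (n / 2)) * ((Real.sin θ)⁻¹ * (Real.sin φ)⁻¹)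
        from by ring, h1, one_mul, ← mul_inv]
    ext i j
    fin_cases i <;> fin_cases j <;>
      simp only [Matrix.mul_apply, Fin.sum_univ_two, Matrix.smul_apply, Matrix.cons_val',
        Matrix.cons_val_zero, Matrix.cons_val_one, Matrix.head_cons, Matrix.empty_val',
        Matrix.cons_val_fin_one, smul_eq_mul, Matrix.head_fin_const, Fin.zero_eta, Fin.mk_one, Matrix.of_apply] <;>
      field_simp <;> ring
  have h1lam : 1 < lam := by
    rw [hlam, lt_div_iff₀ (by positivity)]
    nlinarith
  refine ⟨h1lam, ?_⟩
  rw [hN]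
  have hlam0 : lam ≠ 0 := by linarith
  have hab1 : (Real.cos θ * Real.cos φ + 1) / (Real.sin θ * Real.sin φ)
      + (Real.cos θ + Real.cos φ) / (Real.sin θ * Real.sin φ) = lam := by
    rw [hlam, ← add_div]
    congr 1
    ring
  have hab2 : (Real.cos θ * Real.cos φ + 1) / (Real.sin θ * Real.sin φ)
      - (Real.cos θ + Real.cos φ) / (Real.sin θ * Real.sin φ) = lam⁻¹ := by
    apply eq_inv_of_mul_eq_one_left
    rw [hlam, div_sub_div_same, div_mul_div_comm]
    rw [div_eq_one_iff_eq (by positivity)]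
    nlinarith [Real.sin_sq_add_cos_sq θ, Real.sin_sq_add_cos_sq φ]
  exact spectrum_fin_two _ _ lam lam⁻¹ hab1 hab2
end

section
/- Let m ≥ 3 be an integer that is not of the form 2p^k for any prime p and positive integer k, and let λ = 2cos(π/m). Then λ is a unit in the ring of integers of the number field ℚ(λ). -/
open Real Polynomial

lemma aux14 (m : ℕ) (hm : 3 ≤ m)
    (hnot : ¬ ∃ (p k : ℕ), p.Prime ∧ 1 ≤ k ∧ m = 2 * p ^ k)
    {p : ℕ} (hp : p.Prime) (k : ℕ) : p ^ k ≠ 2 * m / Nat.gcd (m + 2) (2 * m) := by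
  intro hk
  obtain ⟨g, r, hg1, hg2, hg4, hgg, hgr, hrk⟩ :
      ∃ g r, g ∣ m + 2 ∧ g ∣ 2 * m ∧ g ∣ 4 ∧ (∀ d, d ∣ m + 2 → d ∣ 2 * m → d ∣ g) ∧
        g * r = 2 * m ∧ p ^ k = r := by
    refine ⟨Nat.gcd (m + 2) (2 * m), 2 * m / Nat.gcd (m + 2) (2 * m),
      Nat.gcd_dvd_left _ _, Nat.gcd_dvd_right _ _, ?_, fun d h1 h2 => Nat.dvd_gcd h1 h2,
      Nat.mul_div_cancel' (Nat.gcd_dvd_right _ _), hk⟩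
    have h1 : Nat.gcd (m + 2) (2 * m) ∣ 2 * (m + 2) := (Nat.gcd_dvd_left _ _).mul_left 2
    have h2 := Nat.dvd_sub h1 (Nat.gcd_dvd_right _ _)
    have h3 : 2 * (m + 2) - 2 * m = 4 := by omega
    rwa [h3] at h2
  clear hk
  have hoddpk : k ≠ 0 → p % 2 = 1 → p ^ k % 2 = 1 := by
    intro _ h
    rw [Nat.pow_mod, h, one_pow]
    rfl
  have hpe := hp.eq_two_or_odd
  have hg0 : 0 < g := Nat.pos_of_dvd_of_pos hg4 (by norm_num)
  have hgle : g ≤ 4 := Nat.le_of_dvd (by norm_num) hg4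
  interval_cases g
  · -- g = 1 : r = 2*m, m must be odd
    have hmodd : m % 2 = 1 := by
      by_contra h
      have h2 : (2 : ℕ) ∣ 1 := hgg 2 (by omega) (by omega)
      omega
    rcases hpe with rfl | hodd
    · rcases k with _ | k
      · simp at hrk; omega
      · have h2 : 2 * 2 ^ k = 2 * m := by
          rw [← pow_succ']; omega
        have h3 : 2 ^ k = m := by omega
        rcases k with _ | k
        · simp at h3; omega
        · have : (2 : ℕ) ∣ 2 ^ (k + 1) := dvd_pow_self 2 (by omega)
          omega
    · rcases k with _ | k
      · simp at hrk; omega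
      · have := hoddpk (by omega) hodd
        omega
  · -- g = 2 : r = m, m even
    have hme : m % 2 = 0 := by omega
    have hrm : r = m := by omega
    rcases hpe with rfl | hodd
    · have hmk : m = 2 ^ k := by omega
      rcases k with _ | k
      · simp at hmk; omega
      · refine hnot ⟨2, k, Nat.prime_two, ?_, ?_⟩
        · rcases k with _ | k
          · simp at hmk; omega
          · omega
        · rw [hmk, pow_succ']
    · rcases k with _ | k
      · simp at hrk; omega
      · have := hoddpk (by omega) hodd
        omega
  · omega
  · -- g = 4
    have h4 : (4 : ℕ) ∣ m + 2 := hg1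
    have hm2r : m = 2 * r := by omega
    have hrodd : r % 2 = 1 := by omega
    rcases hpe with rfl | hodd
    · rcases k with _ | k
      · simp at hrk; omega
      · have : (2 : ℕ) ∣ 2 ^ (k + 1) := dvd_pow_self 2 (by omega)
        omega
    · rcases k with _ | k
      · simp at hrk; omega
      · exact hnot ⟨p, k + 1, hp, by omega, by omega⟩

lemma int14 (m : ℕ) (hm : 3 ≤ m)
    (hnot : ¬ ∃ (p k : ℕ), p.Prime ∧ 1 ≤ k ∧ m = 2 * p ^ k)
    (lam : ℝ) (hlam : lam = 2 * Real.cos (Real.pi / (m : ℝ))) :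
    lam ≠ 0 ∧ IsIntegral ℤ lam ∧ IsIntegral ℤ lam⁻¹ := by
  have hm0' : (m : ℂ) ≠ 0 := Nat.cast_ne_zero.mpr (by omega)
  have hn0 : 2 * m ≠ 0 := by omega
  have hnC : ((2 * m : ℕ) : ℂ) ≠ 0 := Nat.cast_ne_zero.mpr hn0
  set ζ : ℂ := Complex.exp (2 * π * Complex.I / (2 * m : ℕ)) with hζdef
  have hζ : IsPrimitiveRoot ζ (2 * m) := Complex.isPrimitiveRoot_exp (2 * m) hn0
  have hζint : IsIntegral ℤ ζ := hζ.isIntegral (by omega)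
  have hζne : ζ ≠ 0 := Complex.exp_ne_zero _
  -- lam as a complex number
  have hθ : (2 * (π : ℂ) * Complex.I / (2 * m : ℕ)) = (π : ℂ) / (m : ℂ) * Complex.I := by
    push_cast
    field_simp
  have hlamC : (lam : ℂ) = ζ + ζ⁻¹ := by
    rw [hlam]
    push_cast
    rw [Complex.two_cos, neg_mul, hζdef, hθ, ← Complex.exp_neg]
  -- lam is nonzero
  have hlne : lam ≠ 0 := by
    rw [hlam]
    have h1 : 0 < π / m := by positivity
    have h2 : π / (m : ℝ) < π / 2 := by
      apply div_lt_div_of_pos_left pi_pos (by norm_num)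
      exact_mod_cast (by omega : 2 < m)
    have h3 := Real.cos_pos_of_mem_Ioo ⟨by linarith [pi_pos], h2⟩
    positivity
  -- the auxiliary root of unity μ = -ζ^2
  set g : ℕ := Nat.gcd (m + 2) (2 * m) with hg
  set r : ℕ := 2 * m / g with hrdef
  have hgd1 : g ∣ m + 2 := Nat.gcd_dvd_left _ _
  have hgd2 : g ∣ 2 * m := Nat.gcd_dvd_right _ _
  have hgr : g * r = 2 * m := Nat.mul_div_cancel' hgd2
  have hg0 : 0 < g := Nat.gcd_pos_of_pos_left _ (by omega)
  have hg4 : g ≤ 4 := by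
    have h1 : g ∣ 2 * (m + 2) := hgd1.mul_left 2
    have h2 := Nat.dvd_sub h1 hgd2
    have h3 : 2 * (m + 2) - 2 * m = 4 := by omega
    rw [h3] at h2
    exact Nat.le_of_dvd (by norm_num) h2
  have hr2 : 2 ≤ r := by nlinarith [hgr]
  have hr0 : r ≠ 0 := by omega
  have hga : ((m + 2) / g) * g = m + 2 := Nat.div_mul_cancel hgd1
  have hcop : Nat.Coprime ((m + 2) / g) r := Nat.coprime_div_gcd_div_gcd hg0
  set μ : ℂ := Complex.exp (2 * π * Complex.I * ((((m + 2) / g : ℕ) : ℂ) / (r : ℂ))) with hμdef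
  have hμ : IsPrimitiveRoot μ r := Complex.isPrimitiveRoot_exp_of_coprime _ r hr0 hcop
  have hμζ : μ = -ζ ^ 2 := by
    have h1 : ((((m + 2) / g : ℕ) : ℂ) / (r : ℂ)) = ((m : ℂ) + 2) / ((2 * m : ℕ) : ℂ) := by
      rw [div_eq_div_iff (Nat.cast_ne_zero.mpr hr0) hnC]
      have hnat : ((m + 2) / g) * (2 * m) = (m + 2) * r := by
        calc ((m + 2) / g) * (2 * m) = ((m + 2) / g) * (g * r) := by rw [hgr]
          _ = (((m + 2) / g) * g) * r := by ring
          _ = (m + 2) * r := by rw [hga]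
      exact_mod_cast congrArg (Nat.cast : ℕ → ℂ) hnat
    have hz2 : ζ ^ 2 = Complex.exp (2 * π * Complex.I / (2 * m : ℕ) + 2 * π * Complex.I / (2 * m : ℕ)) := by
      rw [Complex.exp_add, sq]
    have harg : 2 * (π : ℂ) * Complex.I * (((m : ℂ) + 2) / ((2 * m : ℕ) : ℂ)) =
        π * Complex.I + (2 * π * Complex.I / (2 * m : ℕ) + 2 * π * Complex.I / (2 * m : ℕ)) := by
      field_simp
      push_cast
      ring
    rw [hμdef, h1, harg, Complex.exp_add, Complex.exp_pi_mul_I, ← hz2]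
    ring
  -- the product over primitive roots
  have hμS : μ ∈ primitiveRoots r ℂ := (mem_primitiveRoots (by omega)).mpr hμ
  have hprod : ∏ ξ ∈ primitiveRoots r ℂ, (1 - ξ) = 1 := by
    have hc : cyclotomic r ℂ = ∏ ξ ∈ primitiveRoots r ℂ, (X - C ξ) :=
      cyclotomic_eq_prod_X_sub_primitiveRoots hμ
    have he : eval 1 (cyclotomic r ℂ) = 1 :=
      eval_one_cyclotomic_not_prime_pow (fun {p} hp k hkk =>
        aux14 m hm hnot hp k hkk)
    rw [hc, eval_prod] at he
    simpa using he
  have h2 : (1 - μ) * ∏ ξ ∈ (primitiveRoots r ℂ).erase μ, (1 - ξ) = 1 := by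
    rw [Finset.mul_prod_erase _ _ hμS, hprod]
  have hPint : IsIntegral ℤ (∏ ξ ∈ (primitiveRoots r ℂ).erase μ, (1 - ξ)) := by
    refine Finset.prod_induction _ _ (fun a b ha hb => ha.mul hb) isIntegral_one ?_
    intro ξ hξ
    have hξ' : IsPrimitiveRoot ξ r :=
      isPrimitiveRoot_of_mem_primitiveRoots (Finset.mem_of_mem_erase hξ)
    exact isIntegral_one.sub (hξ'.isIntegral (by omega))
  have hinv : (1 - μ)⁻¹ = ∏ ξ ∈ (primitiveRoots r ℂ).erase μ, (1 - ξ) :=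
    inv_eq_of_mul_eq_one_right h2
  have hμ1 : (1 : ℂ) - μ ≠ 0 := sub_ne_zero.mpr (Ne.symm (hμ.ne_one (by omega)))
  have hne2 : (1 : ℂ) + ζ ^ 2 ≠ 0 := by
    rw [hμζ] at hμ1
    simpa [sub_neg_eq_add] using hμ1
  -- inverse formula
  have hlinvC : ((lam : ℝ) : ℂ)⁻¹ = ζ * (1 - μ)⁻¹ := by
    have h1μ : (1 : ℂ) - μ = 1 + ζ ^ 2 := by rw [hμζ]; ring
    rw [hlamC, h1μ]
    apply inv_eq_of_mul_eq_one_right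
    field_simp [hζne, hne2]
    ring
  -- transfer to ℝ
  have fCinj : Function.Injective (Complex.ofRealHom.toIntAlgHom) := Complex.ofReal_injective
  constructor
  · exact hlne
  constructor
  · refine (isIntegral_algHom_iff Complex.ofRealHom.toIntAlgHom fCinj).mp ?_
    show IsIntegral ℤ ((lam : ℝ) : ℂ)
    rw [hlamC]
    exact hζint.add (hζ.inv.isIntegral (by omega))
  · refine (isIntegral_algHom_iff Complex.ofRealHom.toIntAlgHom fCinj).mp ?_
    show IsIntegral ℤ ((lam⁻¹ : ℝ) : ℂ)
    rw [Complex.ofReal_inv, hlinvC, hinv]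
    exact hζint.mul hPint

theorem stmt14 (m : ℕ) (hm : 3 ≤ m)
    (hnot : ¬ ∃ (p k : ℕ), p.Prime ∧ 1 ≤ k ∧ m = 2 * p ^ k)
    (lam : ℝ) (hlam : lam = 2 * Real.cos (Real.pi / (m : ℝ))) :
    ∃ x : integralClosure ℤ (IntermediateField.adjoin ℚ ({lam} : Set ℝ)),
      IsUnit x ∧ ((x : IntermediateField.adjoin ℚ ({lam} : Set ℝ)) : ℝ) = lam := by
  obtain ⟨hlne, h1, h2⟩ := int14 m hm hnot lam hlam
  set K := IntermediateField.adjoin ℚ ({lam} : Set ℝ) with hK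
  have hmem : lam ∈ K := IntermediateField.mem_adjoin_simple_self ℚ lam
  have hmem2 : lam⁻¹ ∈ K := inv_mem hmem
  have hFinj : Function.Injective (K.val.toRingHom.toIntAlgHom) := Subtype.val_injective
  have hx : IsIntegral ℤ (⟨lam, hmem⟩ : K) :=
    (isIntegral_algHom_iff K.val.toRingHom.toIntAlgHom hFinj).mp h1
  have hy : IsIntegral ℤ (⟨lam⁻¹, hmem2⟩ : K) :=
    (isIntegral_algHom_iff K.val.toRingHom.toIntAlgHom hFinj).mp h2
  refine ⟨⟨⟨lam, hmem⟩, hx⟩, IsUnit.of_mul_eq_one ⟨⟨lam⁻¹, hmem2⟩, hy⟩ ?_, rfl⟩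
  exact Subtype.ext (Subtype.ext (mul_inv_cancel₀ hlne))
end

section
/- Let m = 2p^k where p is a prime and k is a positive integer, and let λ = 2cos(π/m). Then λ^{φ(m)} is an associate of p in the ring of integers of ℚ(λ), where φ is Euler's totient function; that is, λ^{φ(m)} = u·p for some unit u of the ring of integers of ℚ(λ). -/
open Real Complex Polynomial Finset

lemma ratio_integral {n : ℕ} (hn : 1 < n) {ζ ξ : ℂ} (hζ : IsPrimitiveRoot ζ n)
    (hξ : ξ ^ n = 1) : IsIntegral ℤ ((1 - ξ) / (1 - ζ)) := by
  have : NeZero n := ⟨by omega⟩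
  obtain ⟨a, -, rfl⟩ := hζ.eq_pow_of_pow_eq_one hξ
  have hζ1 : (1 : ℂ) - ζ ≠ 0 := sub_ne_zero.mpr (Ne.symm (hζ.ne_one hn))
  have key : (1 - ζ ^ a) / (1 - ζ) = ∑ i ∈ Finset.range a, ζ ^ i := by
    rw [div_eq_iff hζ1]
    have h := geom_sum_mul ζ a
    linear_combination h
  rw [key]
  exact IsIntegral.sum _ fun i _ => (hζ.isIntegral (by omega)).pow i

lemma core (p s m a : ℕ) (hp : p.Prime) (hs : 1 ≤ s) (hm4 : 4 ≤ m)
    (hcop : a.Coprime (p ^ s))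
    (hrel : (a : ℝ) / ((p : ℝ) ^ s) = 1 / 2 + 1 / m)
    (lam : ℝ) (hlam : lam = 2 * Real.cos (Real.pi / m)) :
    0 < lam ∧ IsIntegral ℤ (lam ^ Nat.totient (p ^ s) / p) ∧
      IsIntegral ℤ ((p : ℝ) / lam ^ Nat.totient (p ^ s)) := by
  haveI : Fact p.Prime := ⟨hp⟩
  set n := p ^ s with hn_def
  have hn1 : 1 < n := Nat.one_lt_pow (by omega) hp.one_lt
  have hn0 : 0 < n := by omega
  have hm0 : (0 : ℝ) < m := by exact_mod_cast (by omega : 0 < m)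
  have hlam_pos : 0 < lam := by
    rw [hlam]
    have h1 : Real.pi / m < Real.pi / 2 :=
      div_lt_div_of_pos_left Real.pi_pos (by norm_num) (by exact_mod_cast (by omega : 2 < m))
    have h2 : 0 < Real.pi / m := div_pos Real.pi_pos hm0
    have := Real.cos_pos_of_mem_Ioo ⟨by linarith, h1⟩
    linarith
  -- the primitive root
  set η : ℂ := Complex.exp (2 * Real.pi * Complex.I * (a / n)) with hη_def
  have hη : IsPrimitiveRoot η n := Complex.isPrimitiveRoot_exp_of_coprime a n (by omega) hcop
  set x : ℝ := 2 * Real.pi / m with hx_def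
  have hrelC : (a : ℂ) / ((n : ℕ) : ℂ) = 1 / 2 + 1 / (m : ℂ) := by
    have h := congrArg (fun r : ℝ => (r : ℂ)) hrel
    push_cast [hn_def] at h ⊢
    exact h
  have hηx : η = -Complex.exp (x * Complex.I) := by
    rw [hη_def, show 2 * (Real.pi : ℂ) * Complex.I * ((a : ℂ) / ((n : ℕ) : ℂ))
        = Real.pi * Complex.I + (x : ℝ) * Complex.I by
      push_cast [hx_def]
      linear_combination (2 * (Real.pi : ℂ) * Complex.I) * hrelC]
    rw [Complex.exp_add, Complex.exp_pi_mul_I]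
    ring
  have hηinv : η⁻¹ = -Complex.exp (-(x : ℝ) * Complex.I) := by
    rw [hηx, inv_neg, ← Complex.exp_neg]
    congr 2
    ring
  have hsq : ((lam : ℝ) : ℂ) ^ 2 = (1 - η) * (1 - η⁻¹) := by
    have hre : lam ^ 2 = 2 + 2 * Real.cos x := by
      rw [hlam, hx_def, show 2 * Real.pi / m = 2 * (Real.pi / m) by ring, Real.cos_two_mul]
      ring
    have hEinv : (Complex.exp ((x : ℝ) * Complex.I))⁻¹
        = Complex.exp (-(x : ℝ) * Complex.I) := by
      rw [← Complex.exp_neg]; congr 1; ring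
    have h2cos := Complex.two_cos (x := ((x : ℝ) : ℂ))
    have hone : Complex.exp ((x : ℝ) * Complex.I) * Complex.exp (-(x : ℝ) * Complex.I) = 1 := by
      rw [← Complex.exp_add, show ((x:ℝ):ℂ) * Complex.I + -(x:ℝ) * Complex.I = 0 by push_cast; ring,
        Complex.exp_zero]
    rw [hηinv, hηx]
    have hcast : ((lam : ℝ) : ℂ) ^ 2 = 2 + 2 * Complex.cos ((x : ℝ) : ℂ) := by
      rw [← Complex.ofReal_cos, show ((lam : ℝ) : ℂ) ^ 2 = ((lam ^ 2 : ℝ) : ℂ) by push_cast; ring,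
        hre]
      set_option linter.unusedTactic false in
      push_cast
      ring
    rw [hcast]
    linear_combination h2cos - hone
  -- product formula for p
  set PR := primitiveRoots n ℂ with hPR
  have hcard : PR.card = Nat.totient n := hη.card_primitiveRoots
  have hprim : ∀ μ ∈ PR, IsPrimitiveRoot μ n := fun μ hμ => (mem_primitiveRoots hn0).mp hμ
  have hμne : ∀ μ ∈ PR, (1 : ℂ) - μ ≠ 0 := fun μ hμ =>
    sub_ne_zero.mpr (Ne.symm ((hprim μ hμ).ne_one hn1))
  have hprodp : ((p : ℕ) : ℂ) = ∏ μ ∈ PR, (1 - μ) := by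
    obtain ⟨s', rfl⟩ : ∃ s', s = s' + 1 := ⟨s - 1, by omega⟩
    have h1 := Polynomial.eval_one_cyclotomic_prime_pow (R := ℂ) (p := p) s'
    rw [Polynomial.cyclotomic_eq_prod_X_sub_primitiveRoots hη, Polynomial.eval_prod] at h1
    simp only [Polynomial.eval_sub, Polynomial.eval_X, Polynomial.eval_C] at h1
    exact h1.symm
  have hηne : (1 : ℂ) - η ≠ 0 := sub_ne_zero.mpr (Ne.symm (hη.ne_one hn1))
  have hηinvne : (1 : ℂ) - η⁻¹ ≠ 0 := sub_ne_zero.mpr (Ne.symm (hη.inv.ne_one hn1))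
  have hp0 : ((p : ℕ) : ℂ) ≠ 0 := Nat.cast_ne_zero.mpr hp.pos.ne'
  set f := Nat.totient n with hf
  have hT2 : (((lam : ℝ) : ℂ) ^ f / p) ^ 2
      = ∏ μ ∈ PR, ((1 - η) / (1 - μ) * ((1 - η⁻¹) / (1 - μ))) := by
    rw [Finset.prod_mul_distrib, Finset.prod_div_distrib, Finset.prod_div_distrib,
      Finset.prod_const, Finset.prod_const, hcard, ← hprodp]
    rw [div_mul_div_comm, ← mul_pow, ← hsq, div_pow]
    ring
  have hT2inv : ((p : ℂ) / ((lam : ℝ) : ℂ) ^ f) ^ 2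
      = ∏ μ ∈ PR, ((1 - μ) / (1 - η) * ((1 - μ) / (1 - η⁻¹))) := by
    rw [Finset.prod_mul_distrib, Finset.prod_div_distrib, Finset.prod_div_distrib,
      Finset.prod_const, Finset.prod_const, hcard, ← hprodp]
    rw [div_mul_div_comm, ← mul_pow, ← hsq, div_pow]
    ring
  have hTint : IsIntegral ℤ (((lam : ℝ) : ℂ) ^ f / p) := by
    apply IsIntegral.of_pow (n := 2) (by norm_num)
    rw [hT2]
    exact IsIntegral.prod _ fun μ hμ =>
      (ratio_integral hn1 (hprim μ hμ) hη.pow_eq_one).mul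
        (ratio_integral hn1 (hprim μ hμ) hη.inv.pow_eq_one)
  have hTinvint : IsIntegral ℤ ((p : ℂ) / ((lam : ℝ) : ℂ) ^ f) := by
    apply IsIntegral.of_pow (n := 2) (by norm_num)
    rw [hT2inv]
    exact IsIntegral.prod _ fun μ hμ =>
      (ratio_integral hn1 hη (hprim μ hμ).pow_eq_one).mul
        (ratio_integral hn1 hη.inv (hprim μ hμ).pow_eq_one)
  refine ⟨hlam_pos, ?_, ?_⟩
  · rw [← isIntegral_algebraMap_iff (R := ℤ) (A := ℝ) (B := ℂ) (algebraMap ℝ ℂ).injective]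
    have e : (algebraMap ℝ ℂ) (lam ^ f / p) = ((lam : ℝ) : ℂ) ^ f / p := by
      simp [Complex.coe_algebraMap]
    rw [e]; exact hTint
  · rw [← isIntegral_algebraMap_iff (R := ℤ) (A := ℝ) (B := ℂ) (algebraMap ℝ ℂ).injective]
    have e : (algebraMap ℝ ℂ) ((p : ℝ) / lam ^ f) = (p : ℂ) / ((lam : ℝ) : ℂ) ^ f := by
      simp [Complex.coe_algebraMap]
    rw [e]; exact hTinvint


theorem stmt15 (m p k : ℕ) (hp : p.Prime) (hk : 1 ≤ k) (hm : m = 2 * p ^ k)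
    (lam : ℝ) (hlam : lam = 2 * Real.cos (Real.pi / (m : ℝ))) :
    ∃ u : integralClosure ℤ (IntermediateField.adjoin ℚ ({lam} : Set ℝ)),
      IsUnit u ∧
        lam ^ Nat.totient m = ((u : IntermediateField.adjoin ℚ ({lam} : Set ℝ)) : ℝ) * p := by
  obtain ⟨s, a, hs, hcop, hrel, htot⟩ : ∃ (s a : ℕ), 1 ≤ s ∧ a.Coprime (p ^ s) ∧
      ((a : ℝ) / ((p : ℝ) ^ s) = 1 / 2 + 1 / m) ∧ Nat.totient (p ^ s) = Nat.totient m := by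
    rcases hp.eq_two_or_odd' with rfl | hodd
    · refine ⟨k + 1, 2 ^ k + 1, by omega, ?_, ?_, ?_⟩
      · have h2 : (2 : ℕ) ∣ 2 ^ k := dvd_pow_self 2 (by omega)
        have : ¬ (2 : ℕ) ∣ (2 ^ k + 1) := by omega
        exact ((Nat.Prime.coprime_iff_not_dvd Nat.prime_two).mpr this).symm.pow_right _
      · have hm' : (m : ℝ) = 2 ^ (k + 1) := by rw [hm]; push_cast; ring
        have h2 : ((2 : ℝ)) ^ (k + 1) ≠ 0 := by positivity
        rw [hm']
        push_cast
        field_simp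
        ring
      · congr 1
        rw [hm]
        ring
    · obtain ⟨b, hb⟩ := hodd.pow (n := k)
      refine ⟨k, b + 1, hk, ?_, ?_, ?_⟩
      · have hpk : p ∣ p ^ k := dvd_pow_self p (by omega)
        have hnd : ¬ p ∣ (b + 1) := by
          intro h
          have h2 : p ∣ 2 * (b + 1) := h.mul_left 2
          have h3 : 2 * (b + 1) = p ^ k + 1 := by omega
          rw [h3] at h2
          have h4 : p ∣ 1 := by
            have h5 := Nat.dvd_sub h2 hpk
            simpa [Nat.add_sub_cancel_left] using h5
          exact absurd (Nat.le_of_dvd one_pos h4) (by have := hp.two_le; omega)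
        exact ((Nat.Prime.coprime_iff_not_dvd hp).mpr hnd).symm.pow_right _
      · have hpk' : ((p : ℝ)) ^ k = 2 * b + 1 := by exact_mod_cast congrArg (Nat.cast (R := ℝ)) hb
        have hm' : (m : ℝ) = 2 * (2 * b + 1) := by rw [hm]; push_cast [← hpk']; ring
        rw [hm', hpk']
        have : (2 * (b : ℝ) + 1) ≠ 0 := by positivity
        field_simp
        push_cast
        ring
      · rw [hm, Nat.totient_mul, Nat.totient_two, one_mul]
        exact ((Nat.Prime.coprime_iff_not_dvd Nat.prime_two).mpr (by omega)).symm.symm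
  have hm4 : 4 ≤ m := by
    have h1 := hp.two_le
    have h2 : p ≤ p ^ k := Nat.le_self_pow (by omega) p
    omega
  obtain ⟨hpos, hint1, hint2⟩ := core p s m a hp hs hm4 hcop hrel lam hlam
  rw [htot] at hint1 hint2
  set f := Nat.totient m with hf
  set K := IntermediateField.adjoin ℚ ({lam} : Set ℝ) with hK
  have hlamK : lam ∈ K := IntermediateField.mem_adjoin_simple_self ℚ lam
  have hpK : ((p : ℝ)) ∈ K := natCast_mem K p
  have hTmem : lam ^ f / p ∈ K := div_mem (pow_mem hlamK f) hpK
  have hTinvmem : (p : ℝ) / lam ^ f ∈ K := div_mem hpK (pow_mem hlamK f)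
  have hp0 : (p : ℝ) ≠ 0 := Nat.cast_ne_zero.mpr hp.pos.ne'
  have hlf0 : lam ^ f ≠ 0 := pow_ne_zero _ hpos.ne'
  have hinj : Function.Injective (algebraMap K ℝ) := (algebraMap K ℝ).injective
  have hu : IsIntegral ℤ ((⟨lam ^ f / p, hTmem⟩ : K)) := by
    rw [← isIntegral_algebraMap_iff (R := ℤ) (A := K) (B := ℝ) hinj]
    exact hint1
  have hv : IsIntegral ℤ ((⟨(p : ℝ) / lam ^ f, hTinvmem⟩ : K)) := by
    rw [← isIntegral_algebraMap_iff (R := ℤ) (A := K) (B := ℝ) hinj]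
    exact hint2
  refine ⟨⟨⟨lam ^ f / p, hTmem⟩, hu⟩, ?_, ?_⟩
  · apply IsUnit.of_mul_eq_one (⟨⟨(p : ℝ) / lam ^ f, hTinvmem⟩, hv⟩ : integralClosure ℤ K)
    apply Subtype.ext
    apply Subtype.ext
    show (lam ^ f / p) * ((p : ℝ) / lam ^ f) = 1
    field_simp
  · show lam ^ f = (lam ^ f / p) * p
    field_simp
end

section
/- Let λ = 2cos(π/7) and let G_{4,7} be the subgroup of SL(2,ℝ) generated by A = [[1, 2cos(π/4) + 2cos(π/7)], [0, 1]] and B = [[2cos(π/4), 1], [−1, 0]]. Then λ² + λ + 1 is not in the G_{4,7}-orbit of ∞ under the Möbius action: for every M ∈ G_{4,7}, M·∞ ≠ λ² + λ + 1. -/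
open Real Matrix

set_option synthInstance.maxHeartbeats 1000000
set_option synthInstance.maxSize 2000
set_option maxRecDepth 10000
set_option maxHeartbeats 2000000

/-! ## The mod-2 world -/

abbrev W6 := ZMod 2 × ZMod 2 × ZMod 2 × ZMod 2 × ZMod 2 × ZMod 2

def mulLW (v : W6) : W6 :=
  (-v.2.2.1, v.1 + 2*v.2.2.1, v.2.1 + v.2.2.1,
   -v.2.2.2.2.2, v.2.2.2.1 + 2*v.2.2.2.2.2, v.2.2.2.2.1 + v.2.2.2.2.2)

def mulSW (v : W6) : W6 :=
  (2*v.2.2.2.1, 2*v.2.2.2.2.1, 2*v.2.2.2.2.2, v.1, v.2.1, v.2.2.1)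

def stepA (p : W6 × W6) : W6 × W6 := (p.1 + (mulLW p.2 + mulSW p.2), p.2)
def stepAi (p : W6 × W6) : W6 × W6 := (p.1 - (mulLW p.2 + mulSW p.2), p.2)
def stepB (p : W6 × W6) : W6 × W6 := (mulSW p.1 + p.2, -p.1)
def stepBi (p : W6 × W6) : W6 × W6 := (-p.2, p.1 + mulSW p.2)

def encW (p : W6 × W6) : ℕ :=
  p.1.1.val + 2*p.1.2.1.val + 4*p.1.2.2.1.val + 8*p.1.2.2.2.1.val + 16*p.1.2.2.2.2.1.val
  + 32*p.1.2.2.2.2.2.val + 64*p.2.1.val + 128*p.2.2.1.val + 256*p.2.2.2.1.val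
  + 512*p.2.2.2.2.1.val + 1024*p.2.2.2.2.2.1.val + 2048*p.2.2.2.2.2.2.val

def tmask : ℕ := 433296434175094841606618006157985404521421392735133540276756222914641937692263446890552711962321352639383002599554536938374367529210399280040861401826641868563718143039566005566659958007808377799619477160511336773561481604214166852381957383116519542236894783477965805920585497722237414945794184900500425194914772364441205463734959809156285080752612518657157874137236202007706407683203297029327030991162012044471240986850125247613113330593350400009858630465798208060841252153787483617894003791520627392448184440489339004038884139014111594643431766212872249592736194090841271907639836600368735006317061187230068590837769329235947468996328990178017468381210901551510760360281584435707003855920687442971310596431560523355070542568588822500042286814988320217974259155107830725520859079072073981442465950909513656361025260259905277852884004021102842436006520743227126764460960298561330143804880811782236174378451921422980460743818280508344907490022386196835042244410589062427427873611390352707445098524361140986740119355856137376282816532811955868060271617085919306015974493509558928592652718732056544777165245484978043440921530852304426577017664057386013233362088558685257158586272236498667723424258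

def inT (p : W6 × W6) : Prop := (tmask >>> encW p) % 2 = 1

instance (p : W6 × W6) : Decidable (inT p) := by unfold inT; infer_instance

theorem tableCheck : ∀ p q : W6, inT (p,q) →
    (inT (stepA (p,q)) ∧ inT (stepAi (p,q)) ∧ inT (stepB (p,q)) ∧
     inT (stepBi (p,q)) ∧ ¬ (p = q + mulLW q + mulLW (mulLW q))) := by decide

/-! ## Integer level -/

abbrev I6 := ℤ × ℤ × ℤ × ℤ × ℤ × ℤ

def mulLZ (v : I6) : I6 :=
  (-v.2.2.1, v.1 + 2*v.2.2.1, v.2.1 + v.2.2.1,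
   -v.2.2.2.2.2, v.2.2.2.1 + 2*v.2.2.2.2.2, v.2.2.2.2.1 + v.2.2.2.2.2)

def mulSZ (v : I6) : I6 :=
  (2*v.2.2.2.1, 2*v.2.2.2.2.1, 2*v.2.2.2.2.2, v.1, v.2.1, v.2.2.1)

def red (v : I6) : W6 :=
  ((v.1 : ZMod 2), (v.2.1 : ZMod 2), (v.2.2.1 : ZMod 2),
   (v.2.2.2.1 : ZMod 2), (v.2.2.2.2.1 : ZMod 2), (v.2.2.2.2.2 : ZMod 2))

def rho (l s : ℝ) (v : I6) : ℝ :=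
  (v.1 : ℝ) + (v.2.1 : ℝ)*l + (v.2.2.1 : ℝ)*l^2
    + ((v.2.2.2.1 : ℝ) + (v.2.2.2.2.1 : ℝ)*l + (v.2.2.2.2.2 : ℝ)*l^2)*s

lemma red_add (u v : I6) : red (u + v) = red u + red v := by
  obtain ⟨a,b,c,d,e,f⟩ := u; obtain ⟨a',b',c',d',e',f'⟩ := v
  simp only [Prod.mk_add_mk, red]
  push_cast
  rfl

lemma red_sub (u v : I6) : red (u - v) = red u - red v := by
  obtain ⟨a,b,c,d,e,f⟩ := u; obtain ⟨a',b',c',d',e',f'⟩ := v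
  simp only [Prod.mk_sub_mk, red]
  push_cast
  rfl

lemma red_neg (v : I6) : red (-v) = -(red v) := by
  obtain ⟨a,b,c,d,e,f⟩ := v
  simp only [Prod.neg_mk, red]
  push_cast
  rfl

lemma red_mulL (v : I6) : red (mulLZ v) = mulLW (red v) := by
  obtain ⟨a,b,c,d,e,f⟩ := v
  simp only [mulLZ, mulLW, red]
  push_cast
  rfl

lemma red_mulS (v : I6) : red (mulSZ v) = mulSW (red v) := by
  obtain ⟨a,b,c,d,e,f⟩ := v
  simp only [mulSZ, mulSW, red]
  push_cast
  rfl

section Rho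

variable {l s : ℝ}

lemma rho_add (u v : I6) : rho l s (u + v) = rho l s u + rho l s v := by
  simp only [rho, Prod.fst_add, Prod.snd_add]
  push_cast; ring

lemma rho_sub (u v : I6) : rho l s (u - v) = rho l s u - rho l s v := by
  simp only [rho, Prod.fst_sub, Prod.snd_sub]
  push_cast; ring

lemma rho_neg (v : I6) : rho l s (-v) = -(rho l s v) := by
  simp only [rho, Prod.fst_neg, Prod.snd_neg]
  push_cast; ring

lemma rho_mulL (hl : l^3 = l^2 + 2*l - 1) (v : I6) :
    rho l s (mulLZ v) = l * rho l s v := by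
  simp only [rho, mulLZ]
  push_cast
  linear_combination (-(v.2.2.1 : ℝ) - (v.2.2.2.2.2 : ℝ)*s) * hl

lemma rho_mulS (hs : s^2 = 2) (v : I6) :
    rho l s (mulSZ v) = s * rho l s v := by
  simp only [rho, mulSZ]
  push_cast
  linear_combination (-(v.2.2.2.1 : ℝ) - (v.2.2.2.2.1 : ℝ)*l - (v.2.2.2.2.2 : ℝ)*l^2) * hs

end Rho

/-! ## Linear independence via norm-form descent -/

lemma nf3 : ∀ n : ℕ, ∀ a b c : ℤ, a.natAbs + b.natAbs + c.natAbs ≤ n →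
    a^3 + a^2*b + 5*a^2*c + a*b*c - 2*a*b^2 + 6*a*c^2 - b^3 - b^2*c + 2*b*c^2 + c^3 = 0 →
    a = 0 ∧ b = 0 ∧ c = 0 := by
  intro n
  induction n using Nat.strong_induction_on with
  | _ n ih =>
    intro a b c hn h
    by_cases h0 : a = 0 ∧ b = 0 ∧ c = 0
    · exact h0
    · have key : ∀ x y z : ZMod 2,
          x^3 + x^2*y + 5*x^2*z + x*y*z - 2*x*y^2 + 6*x*z^2 - y^3 - y^2*z + 2*y*z^2 + z^3 = 0 →
          x = 0 ∧ y = 0 ∧ z = 0 := by decide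
      have h2 : ((a : ZMod 2))^3 + ((a:ZMod 2))^2*(b:ZMod 2) + 5*((a:ZMod 2))^2*(c:ZMod 2)
          + (a:ZMod 2)*(b:ZMod 2)*(c:ZMod 2) - 2*(a:ZMod 2)*((b:ZMod 2))^2
          + 6*(a:ZMod 2)*((c:ZMod 2))^2 - ((b:ZMod 2))^3 - ((b:ZMod 2))^2*(c:ZMod 2)
          + 2*(b:ZMod 2)*((c:ZMod 2))^2 + ((c:ZMod 2))^3 = 0 := by
        have h' := congrArg (fun t : ℤ => (t : ZMod 2)) h
        push_cast at h'
        linear_combination h'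
      obtain ⟨ea, eb, ec⟩ := key _ _ _ h2
      rw [ZMod.intCast_zmod_eq_zero_iff_dvd] at ea eb ec
      obtain ⟨a', rfl⟩ := ea
      obtain ⟨b', rfl⟩ := eb
      obtain ⟨c', rfl⟩ := ec
      have h8 : 8 * (a'^3 + a'^2*b' + 5*a'^2*c' + a'*b'*c' - 2*a'*b'^2 + 6*a'*c'^2
          - b'^3 - b'^2*c' + 2*b'*c'^2 + c'^3) = 0 := by linear_combination h
      have h' : a'^3 + a'^2*b' + 5*a'^2*c' + a'*b'*c' - 2*a'*b'^2 + 6*a'*c'^2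
          - b'^3 - b'^2*c' + 2*b'*c'^2 + c'^3 = 0 := by linarith
      have hna : (2*a').natAbs = 2*a'.natAbs := by rw [Int.natAbs_mul]; rfl
      have hnb : (2*b').natAbs = 2*b'.natAbs := by rw [Int.natAbs_mul]; rfl
      have hnc : (2*c').natAbs = 2*c'.natAbs := by rw [Int.natAbs_mul]; rfl
      have hlt : a'.natAbs + b'.natAbs + c'.natAbs < n := by
        have hne : ¬(2*a' = 0 ∧ 2*b' = 0 ∧ 2*c' = 0) := h0
        omega
      obtain ⟨ea', eb', ec'⟩ := ih _ hlt a' b' c' le_rfl h'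
      exact ⟨by rw [ea']; ring, by rw [eb']; ring, by rw [ec']; ring⟩

lemma quadIndep {l : ℝ} (hl : l^3 = l^2 + 2*l - 1) (a b c : ℤ)
    (E1 : (a:ℝ) + (b:ℝ)*l + (c:ℝ)*l^2 = 0) : a = 0 ∧ b = 0 ∧ c = 0 := by
  have E2 : -(c:ℝ) + ((a:ℝ)+2*c)*l + ((b:ℝ)+c)*l^2 = 0 := by
    linear_combination l*E1 - (c:ℝ)*hl
  have E3 : -((b:ℝ)+c) + (2*(b:ℝ)+c)*l + ((a:ℝ)+(b:ℝ)+3*c)*l^2 = 0 := by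
    linear_combination l*E2 - ((b:ℝ)+c)*hl
  have hN : ((a^3 + a^2*b + 5*a^2*c + a*b*c - 2*a*b^2 + 6*a*c^2
      - b^3 - b^2*c + 2*b*c^2 + c^3 : ℤ) : ℝ) = 0 := by
    push_cast
    linear_combination ((a:ℝ)^2 + (a:ℝ)*b + 5*(a:ℝ)*c - 2*(b:ℝ)^2 - (b:ℝ)*c + 5*(c:ℝ)^2) * E1
      + (-(a:ℝ)*b - (b:ℝ)^2 - (b:ℝ)*c + (c:ℝ)^2) * E2
      + (-(a:ℝ)*c + (b:ℝ)^2 + (b:ℝ)*c - 2*(c:ℝ)^2) * E3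
  exact nf3 _ a b c le_rfl (by exact_mod_cast hN)

lemma sixIndepAux {l s : ℝ} (hl : l^3 = l^2 + 2*l - 1) (hs : s^2 = 2) :
    ∀ n : ℕ, ∀ w0 w1 w2 z0 z1 z2 : ℤ,
    w0.natAbs + w1.natAbs + w2.natAbs + z0.natAbs + z1.natAbs + z2.natAbs ≤ n →
    (w0:ℝ) + (w1:ℝ)*l + (w2:ℝ)*l^2 + ((z0:ℝ) + (z1:ℝ)*l + (z2:ℝ)*l^2)*s = 0 →
    w0 = 0 ∧ w1 = 0 ∧ w2 = 0 ∧ z0 = 0 ∧ z1 = 0 ∧ z2 = 0 := by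
  have hs0 : s ≠ 0 := by intro h; rw [h] at hs; norm_num at hs
  intro n
  induction n using Nat.strong_induction_on with
  | _ n ih =>
    intro w0 w1 w2 z0 z1 z2 hn E
    by_cases hw : w0 = 0 ∧ w1 = 0 ∧ w2 = 0
    · obtain ⟨h0, h1, h2⟩ := hw
      have hZ : ((z0:ℝ) + (z1:ℝ)*l + (z2:ℝ)*l^2) * s = 0 := by
        rw [h0, h1, h2] at E; push_cast at E; linarith
      have hZ' : (z0:ℝ) + (z1:ℝ)*l + (z2:ℝ)*l^2 = 0 :=
        (mul_eq_zero.mp hZ).resolve_right hs0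
      obtain ⟨e1, e2, e3⟩ := quadIndep hl z0 z1 z2 hZ'
      exact ⟨h0, h1, h2, e1, e2, e3⟩
    · have hsq : ((w0:ℝ)+(w1:ℝ)*l+(w2:ℝ)*l^2)^2 - 2*((z0:ℝ)+(z1:ℝ)*l+(z2:ℝ)*l^2)^2 = 0 := by
        linear_combination ((w0:ℝ)+(w1:ℝ)*l+(w2:ℝ)*l^2 - ((z0:ℝ)+(z1:ℝ)*l+(z2:ℝ)*l^2)*s) * E
          + ((z0:ℝ)+(z1:ℝ)*l+(z2:ℝ)*l^2)^2 * hs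
      have hl4 : l^4 = 3*l^2 + l - 1 := by linear_combination (l+1)*hl
      have hq : ((w0^2 - 2*z0^2 - 2*w1*w2 + 4*z1*z2 - w2^2 + 2*z2^2 : ℤ):ℝ)
          + ((2*w0*w1 - 4*z0*z1 + 4*w1*w2 - 8*z1*z2 + w2^2 - 2*z2^2 : ℤ):ℝ)*l
          + ((w1^2 + 2*w0*w2 - 2*z1^2 - 4*z0*z2 + 2*w1*w2 - 4*z1*z2 + 3*w2^2 - 6*z2^2 : ℤ):ℝ)*l^2
          = 0 := by
        push_cast
        linear_combination hsq - (2*(w1:ℝ)*w2 - 4*(z1:ℝ)*z2)*hl - ((w2:ℝ)^2 - 2*(z2:ℝ)^2)*hl4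
      obtain ⟨hr0, hr1, hr2⟩ := quadIndep hl _ _ _ hq
      have d2 : (2:ℤ) ∣ w2 := by
        refine Int.prime_two.dvd_of_dvd_pow (n := 2) ⟨-w0*w1 + 2*z0*z1 - 2*w1*w2 + 4*z1*z2 + z2^2, ?_⟩
        linear_combination hr1
      obtain ⟨t2, rfl⟩ := d2
      have d0 : (2:ℤ) ∣ w0 := by
        refine Int.prime_two.dvd_of_dvd_pow (n := 2) ⟨z0^2 + 2*w1*t2 - 2*z1*z2 + 2*t2^2 - z2^2, ?_⟩
        linear_combination hr0
      obtain ⟨t0, rfl⟩ := d0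
      have d1 : (2:ℤ) ∣ w1 := by
        refine Int.prime_two.dvd_of_dvd_pow (n := 2)
          ⟨-4*t0*t2 + z1^2 + 2*z0*z2 - 2*w1*t2 + 2*z1*z2 - 6*t2^2 + 3*z2^2, ?_⟩
        linear_combination hr2
      obtain ⟨t1, rfl⟩ := d1
      have E' : (z0:ℝ) + (z1:ℝ)*l + (z2:ℝ)*l^2 + ((t0:ℝ) + (t1:ℝ)*l + (t2:ℝ)*l^2)*s = 0 := by
        push_cast at E
        linear_combination (s/2) * E - (((z0:ℝ)+(z1:ℝ)*l+(z2:ℝ)*l^2)/2)*hs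
      have hna : (2*t0).natAbs = 2*t0.natAbs := by rw [Int.natAbs_mul]; rfl
      have hnb : (2*t1).natAbs = 2*t1.natAbs := by rw [Int.natAbs_mul]; rfl
      have hnc : (2*t2).natAbs = 2*t2.natAbs := by rw [Int.natAbs_mul]; rfl
      have hlt : z0.natAbs + z1.natAbs + z2.natAbs + t0.natAbs + t1.natAbs + t2.natAbs < n := by
        have hne : ¬(2*t0 = 0 ∧ 2*t1 = 0 ∧ 2*t2 = 0) := hw
        omega
      obtain ⟨f1, f2, f3, f4, f5, f6⟩ := ih _ hlt z0 z1 z2 t0 t1 t2 le_rfl E'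
      exact ⟨by rw [f4]; ring, by rw [f5]; ring, by rw [f6]; ring, f1, f2, f3⟩

lemma rho_eq_zero {l s : ℝ} (hl : l^3 = l^2 + 2*l - 1) (hs : s^2 = 2) (v : I6)
    (h : rho l s v = 0) : v = 0 := by
  obtain ⟨a, b, c, d, e, f⟩ := v
  simp only [rho] at h
  obtain ⟨h1, h2, h3, h4, h5, h6⟩ :=
    sixIndepAux hl hs (a.natAbs + b.natAbs + c.natAbs + d.natAbs + e.natAbs + f.natAbs)
      a b c d e f le_rfl h
  simp [h1, h2, h3, h4, h5, h6, Prod.ext_iff]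

/-! ## Main theorem -/

theorem stmt16 (lam : ℝ) (hlam : lam = 2 * Real.cos (Real.pi / 7))
    (A B : Matrix.SpecialLinearGroup (Fin 2) ℝ)
    (hA : (A : Matrix (Fin 2) (Fin 2) ℝ) =
      !![1, 2 * Real.cos (Real.pi / 4) + 2 * Real.cos (Real.pi / 7); 0, 1])
    (hB : (B : Matrix (Fin 2) (Fin 2) ℝ) =
      !![2 * Real.cos (Real.pi / 4), 1; -1, 0]) :
    ∀ M ∈ Subgroup.closure ({A, B} : Set (Matrix.SpecialLinearGroup (Fin 2) ℝ)),
      (M : Matrix (Fin 2) (Fin 2) ℝ) 1 0 ≠ 0 →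
        (M : Matrix (Fin 2) (Fin 2) ℝ) 0 0 / (M : Matrix (Fin 2) (Fin 2) ℝ) 1 0 ≠
          lam ^ 2 + lam + 1 := by
  intro M hM hc heq
  -- basic real facts
  set s : ℝ := Real.sqrt 2 with hsdef
  have hs : s^2 = 2 := Real.sq_sqrt (by norm_num)
  have hcos4 : 2 * Real.cos (Real.pi / 4) = s := by
    rw [Real.cos_pi_div_four]; rw [hsdef]; ring
  have hx : Real.cos (Real.pi/7) > 0 := by
    apply Real.cos_pos_of_mem_Ioo
    constructor
    · have := Real.pi_pos; nlinarith
    · have := Real.pi_pos; nlinarith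
  have hl : lam^3 = lam^2 + 2*lam - 1 := by
    set x : ℝ := Real.cos (Real.pi/7) with hxdef
    have h4 : Real.cos (4*(Real.pi/7)) = -Real.cos (3*(Real.pi/7)) := by
      have h47 : (4:ℝ)*(Real.pi/7) = Real.pi - 3*(Real.pi/7) := by ring
      rw [h47, Real.cos_pi_sub]
    have e4 : Real.cos (4*(Real.pi/7)) = 2*(2*x^2-1)^2 - 1 := by
      have h24 : (4:ℝ)*(Real.pi/7) = 2*(2*(Real.pi/7)) := by ring
      rw [h24, Real.cos_two_mul, Real.cos_two_mul]
    have e3 : Real.cos (3*(Real.pi/7)) = 4*x^3 - 3*x := Real.cos_three_mul _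
    rw [e4, e3] at h4
    have hq : (x+1)*(8*x^3-4*x^2-4*x+1) = 0 := by linear_combination h4
    have hx1 : x + 1 ≠ 0 := by positivity
    have key : 8*x^3-4*x^2-4*x+1 = 0 := (mul_eq_zero.mp hq).resolve_left hx1
    rw [hlam]
    linear_combination key
  -- entries of the generators
  have hA' : (A : Matrix (Fin 2) (Fin 2) ℝ) = !![1, s + lam; 0, 1] := by
    rw [hA, hlam, ← hcos4]
  have hB' : (B : Matrix (Fin 2) (Fin 2) ℝ) = !![s, 1; -1, 0] := by
    rw [hB, ← hcos4]
  have hAi : ((A⁻¹ : Matrix.SpecialLinearGroup (Fin 2) ℝ) : Matrix (Fin 2) (Fin 2) ℝ)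
      = !![1, -(s + lam); 0, 1] := by
    rw [Matrix.SpecialLinearGroup.coe_inv, hA', Matrix.adjugate_fin_two]
    norm_num
  have hBi : ((B⁻¹ : Matrix.SpecialLinearGroup (Fin 2) ℝ) : Matrix (Fin 2) (Fin 2) ℝ)
      = !![0, -1; 1, s] := by
    rw [Matrix.SpecialLinearGroup.coe_inv, hB', Matrix.adjugate_fin_two]
    norm_num
  -- the inductive invariant
  have key : ∃ v w : I6, (M : Matrix (Fin 2) (Fin 2) ℝ) 0 0 = rho lam s v ∧
      (M : Matrix (Fin 2) (Fin 2) ℝ) 1 0 = rho lam s w ∧ inT (red v, red w) := by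
    refine Subgroup.closure_induction_left
      (p := fun (N : Matrix.SpecialLinearGroup (Fin 2) ℝ) (_ : N ∈ Subgroup.closure ({A, B} : Set (Matrix.SpecialLinearGroup (Fin 2) ℝ))) => ∃ v w : I6, (N : Matrix (Fin 2) (Fin 2) ℝ) 0 0 = rho lam s v ∧
        (N : Matrix (Fin 2) (Fin 2) ℝ) 1 0 = rho lam s w ∧ inT (red v, red w))
      ?_ ?_ ?_ hM
    · refine ⟨(1,0,0,0,0,0), 0, ?_, ?_, by decide⟩
      · simp [rho]
      · simp [rho]
    · rintro x hx y hy ⟨v, w, h0, h1, hT⟩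
      simp only [Set.mem_insert_iff, Set.mem_singleton_iff] at hx
      rcases hx with rfl | rfl
      · refine ⟨v + (mulLZ w + mulSZ w), w, ?_, ?_, ?_⟩
        · rw [Matrix.SpecialLinearGroup.coe_mul, Matrix.mul_apply, Fin.sum_univ_two, hA', h0, h1]
          rw [rho_add, rho_add, rho_mulL hl, rho_mulS hs]
          simp [Matrix.cons_val_zero, Matrix.cons_val_one, Matrix.head_cons]
          try ring
        · rw [Matrix.SpecialLinearGroup.coe_mul, Matrix.mul_apply, Fin.sum_univ_two, hA', h0, h1]
          simp [Matrix.cons_val_zero, Matrix.cons_val_one, Matrix.head_cons]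
        · have := (tableCheck (red v) (red w) hT).1
          have hp : (red (v + (mulLZ w + mulSZ w)), red w) = stepA (red v, red w) := by
            rw [red_add, red_add, red_mulL, red_mulS]; rfl
          rw [hp]; exact this
      · refine ⟨mulSZ v + w, -v, ?_, ?_, ?_⟩
        · rw [Matrix.SpecialLinearGroup.coe_mul, Matrix.mul_apply, Fin.sum_univ_two, hB', h0, h1]
          rw [rho_add, rho_mulS hs]
          simp [Matrix.cons_val_zero, Matrix.cons_val_one, Matrix.head_cons]
        · rw [Matrix.SpecialLinearGroup.coe_mul, Matrix.mul_apply, Fin.sum_univ_two, hB', h0, h1]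
          rw [rho_neg]
          simp [Matrix.cons_val_zero, Matrix.cons_val_one, Matrix.head_cons]
          try ring
        · have := (tableCheck (red v) (red w) hT).2.2.1
          have hp : (red (mulSZ v + w), red (-v)) = stepB (red v, red w) := by
            rw [red_add, red_mulS, red_neg]; rfl
          rw [hp]; exact this
    · rintro x hx y hy ⟨v, w, h0, h1, hT⟩
      simp only [Set.mem_insert_iff, Set.mem_singleton_iff] at hx
      rcases hx with rfl | rfl
      · refine ⟨v - (mulLZ w + mulSZ w), w, ?_, ?_, ?_⟩
        · rw [Matrix.SpecialLinearGroup.coe_mul, Matrix.mul_apply, Fin.sum_univ_two, hAi, h0, h1]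
          rw [rho_sub, rho_add, rho_mulL hl, rho_mulS hs]
          simp [Matrix.cons_val_zero, Matrix.cons_val_one, Matrix.head_cons]
          try ring
        · rw [Matrix.SpecialLinearGroup.coe_mul, Matrix.mul_apply, Fin.sum_univ_two, hAi, h0, h1]
          simp [Matrix.cons_val_zero, Matrix.cons_val_one, Matrix.head_cons]
        · have := (tableCheck (red v) (red w) hT).2.1
          have hp : (red (v - (mulLZ w + mulSZ w)), red w) = stepAi (red v, red w) := by
            rw [red_sub, red_add, red_mulL, red_mulS]; rfl
          rw [hp]; exact this
      · refine ⟨-w, v + mulSZ w, ?_, ?_, ?_⟩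
        · rw [Matrix.SpecialLinearGroup.coe_mul, Matrix.mul_apply, Fin.sum_univ_two, hBi, h0, h1]
          rw [rho_neg]
          simp [Matrix.cons_val_zero, Matrix.cons_val_one, Matrix.head_cons]
          try ring
        · rw [Matrix.SpecialLinearGroup.coe_mul, Matrix.mul_apply, Fin.sum_univ_two, hBi, h0, h1]
          rw [rho_add, rho_mulS hs]
          simp [Matrix.cons_val_zero, Matrix.cons_val_one, Matrix.head_cons]
          try ring
        · have := (tableCheck (red v) (red w) hT).2.2.2.1
          have hp : (red (-w), red (v + mulSZ w)) = stepBi (red v, red w) := by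
            rw [red_add, red_mulS, red_neg]; rfl
          rw [hp]; exact this
  obtain ⟨v, w, h0, h1, hT⟩ := key
  have hM00 : (M : Matrix (Fin 2) (Fin 2) ℝ) 0 0
      = (lam^2 + lam + 1) * (M : Matrix (Fin 2) (Fin 2) ℝ) 1 0 := by
    rw [← heq, div_mul_cancel₀ _ hc]
  have hrho : rho lam s v - rho lam s (w + mulLZ w + mulLZ (mulLZ w)) = 0 := by
    rw [rho_add, rho_add, rho_mulL hl, rho_mulL hl, rho_mulL hl, ← h0, ← h1, hM00, h1]
    ring
  have hvq : v = w + mulLZ w + mulLZ (mulLZ w) := by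
    have := rho_eq_zero hl hs _ (by rw [rho_sub]; exact hrho)
    exact sub_eq_zero.mp this
  have hbad := (tableCheck (red v) (red w) hT).2.2.2.2
  apply hbad
  rw [hvq, red_add, red_add, red_mulL, red_mulL, red_mulL]
end

section
/- Let λ = 2cos(π/7) and α = 7λ² + λ − 1. Then α ≠ 16 and ((α + 13)/(α − 16))² = α; in particular, the positive square root of α lies in the field ℚ(cos(π/7)). -/
open Real

private lemma aux16 (c : ℝ) (h : 0.85 < c) : 16 < 7 * (2 * c) ^ 2 + 2 * c - 1 := by
  nlinarith

theorem stmt17 (lam α : ℝ) (hlam : lam = 2 * Real.cos (Real.pi / 7))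
    (hα : α = 7 * lam ^ 2 + lam - 1) :
    α ≠ 16 ∧ ((α + 13) / (α - 16)) ^ 2 = α ∧
      Real.sqrt α ∈ Subfield.closure ({Real.cos (Real.pi / 7)} : Set ℝ) := by
  set c := Real.cos (Real.pi / 7) with hc
  have hpi := Real.pi_pos
  -- quartic relation from cos(4x) = -cos(3x)
  have h4 : Real.cos (4 * (Real.pi / 7)) = - Real.cos (3 * (Real.pi / 7)) := by
    rw [show 4 * (Real.pi / 7) = Real.pi - 3 * (Real.pi / 7) by ring, Real.cos_pi_sub]
  have h3 : Real.cos (3 * (Real.pi / 7)) = 4 * c ^ 3 - 3 * c := Real.cos_three_mul _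
  have h2 : Real.cos (2 * (Real.pi / 7)) = 2 * c ^ 2 - 1 := Real.cos_two_mul _
  have h4' : Real.cos (4 * (Real.pi / 7)) = 2 * (2 * c ^ 2 - 1) ^ 2 - 1 := by
    rw [show 4 * (Real.pi / 7) = 2 * (2 * (Real.pi / 7)) by ring, Real.cos_two_mul, h2]
  have hquart : 8 * c ^ 4 + 4 * c ^ 3 - 8 * c ^ 2 - 3 * c + 1 = 0 := by
    have := h4.symm.trans h4'
    rw [h3] at this
    linear_combination -this
  -- c > 1/2, c > sqrt 3 / 2
  have hcpos : (0:ℝ) < c := by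
    apply Real.cos_pos_of_mem_Ioo
    constructor <;> nlinarith [Real.pi_pos]
  have hgt : Real.sqrt 3 / 2 < c := by
    rw [hc, ← Real.cos_pi_div_six]
    apply Real.cos_lt_cos_of_nonneg_of_le_pi
    · positivity
    · nlinarith
    · nlinarith
  have hs3 : (1.7:ℝ) < Real.sqrt 3 := by
    nlinarith [Real.sq_sqrt (by norm_num : (3:ℝ) ≥ 0), Real.sqrt_nonneg 3]
  have hc85 : (0.85:ℝ) < c := by linarith
  -- cubic for c
  have hcube : 8 * c ^ 3 - 4 * c ^ 2 - 4 * c + 1 = 0 := by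
    have hfac : (c + 1) * (8 * c ^ 3 - 4 * c ^ 2 - 4 * c + 1) = 0 := by linear_combination hquart
    have : c + 1 ≠ 0 := by nlinarith
    rcases mul_eq_zero.mp hfac with h | h
    · exact absurd h this
    · exact h
  have hlc : lam ^ 3 - lam ^ 2 - 2 * lam + 1 = 0 := by
    rw [hlam]; linear_combination hcube
  -- α > 16
  have hα16 : 16 < α := by
    rw [hα, hlam]; exact aux16 c hc85
  have hαpos : 0 < α := by linarith
  refine ⟨by linarith, ?_, ?_⟩
  · have hsq : (α + 13) ^ 2 = α * (α - 16) ^ 2 := by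
      rw [hα]
      linear_combination (-343 * lam ^ 3 - 490 * lam ^ 2 + 567 * lam + 433) * hlc
    have hne : α - 16 ≠ 0 := by intro h; nlinarith
    field_simp
    linarith [hsq]
  · have hsqrt : Real.sqrt α = (α + 13) / (α - 16) := by
      have hnn : 0 ≤ (α + 13) / (α - 16) :=
        div_nonneg (by linarith) (by linarith)
      have hsq : (α + 13) ^ 2 = α * (α - 16) ^ 2 := by
        rw [hα]
        linear_combination (-343 * lam ^ 3 - 490 * lam ^ 2 + 567 * lam + 433) * hlc
      have heq : α = ((α + 13) / (α - 16)) ^ 2 := by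
        have hne : α - 16 ≠ 0 := by intro h; nlinarith
        field_simp
        linarith [hsq]
      conv_lhs => rw [heq]
      exact Real.sqrt_sq hnn
    rw [hsqrt]
    have hcm : c ∈ Subfield.closure ({c} : Set ℝ) :=
      Subfield.subset_closure (Set.mem_singleton _)
    set S := Subfield.closure ({c} : Set ℝ)
    have hαm : α ∈ S := by
      rw [hα, hlam]
      have h2m : (2:ℝ) ∈ S := by
        have : ((2:ℕ):ℝ) ∈ S := natCast_mem S 2
        simpa using this
      have h7m : (7:ℝ) ∈ S := by
        have : ((7:ℕ):ℝ) ∈ S := natCast_mem S 7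
        simpa using this
      have h1m : (1:ℝ) ∈ S := S.one_mem
      exact S.sub_mem (S.add_mem (S.mul_mem h7m (S.pow_mem (S.mul_mem h2m hcm) 2))
        (S.mul_mem h2m hcm)) h1m
    have h13m : (13:ℝ) ∈ S := by
      have : ((13:ℕ):ℝ) ∈ S := natCast_mem S 13
      simpa using this
    have h16m : (16:ℝ) ∈ S := by
      have : ((16:ℕ):ℝ) ∈ S := natCast_mem S 16
      simpa using this
    exact S.div_mem (S.add_mem hαm h13m) (S.sub_mem hαm h16m)
end

section
/- Let λ = 2cos(π/7), A = [[1, 2λ], [0, 1]], C = [[−λ, 1], [−1, 0]], and M = A·C⁵. Then M = [[−1 − 2λ², 2λ² + 3λ − 2], [−λ, λ² − 1]], |tr M| = 2 + λ² > 2 (so M is hyperbolic), and the two fixed points of the Möbius action of M on ℝ are (3λ² + √(7λ² + λ − 1))/(2λ) and (3λ² − √(7λ² + λ − 1))/(2λ), both of which lie in the subfield ℚ(cos(π/7)) of ℝ. -/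
open Real Matrix

theorem stmt18 (lam : ℝ) (hlam : lam = 2 * Real.cos (Real.pi / 7))
    (A C M : Matrix (Fin 2) (Fin 2) ℝ)
    (hA : A = !![1, 2 * lam; 0, 1])
    (hC : C = !![-lam, 1; -1, 0])
    (hM : M = A * C ^ 5) :
    M = !![-1 - 2 * lam ^ 2, 2 * lam ^ 2 + 3 * lam - 2; -lam, lam ^ 2 - 1] ∧
    |Matrix.trace M| = 2 + lam ^ 2 ∧
    2 < |Matrix.trace M| ∧
    {z : ℝ | M 0 0 * z + M 0 1 = (M 1 0 * z + M 1 1) * z} =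
      {(3 * lam ^ 2 + Real.sqrt (7 * lam ^ 2 + lam - 1)) / (2 * lam),
        (3 * lam ^ 2 - Real.sqrt (7 * lam ^ 2 + lam - 1)) / (2 * lam)} ∧
    (3 * lam ^ 2 + Real.sqrt (7 * lam ^ 2 + lam - 1)) / (2 * lam) ∈
      Subfield.closure ({Real.cos (Real.pi / 7)} : Set ℝ) ∧
    (3 * lam ^ 2 - Real.sqrt (7 * lam ^ 2 + lam - 1)) / (2 * lam) ∈
      Subfield.closure ({Real.cos (Real.pi / 7)} : Set ℝ) := by
  set c : ℝ := Real.cos (Real.pi / 7) with hc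
  -- c > 1/2
  have hpi := Real.pi_pos
  have hc_half : (1:ℝ)/2 < c := by
    have h1 : Real.cos (Real.pi / 3) < Real.cos (Real.pi / 7) := by
      apply Real.cos_lt_cos_of_nonneg_of_le_pi
      · positivity
      · linarith
      · linarith
    rw [Real.cos_pi_div_three] at h1
    exact h1
  have hlam1 : 1 < lam := by rw [hlam]; linarith
  have hlam0 : lam ≠ 0 := by linarith
  -- the cubic relation: 8c^3 - 4c^2 - 4c + 1 = 0
  have hccube : 8 * c ^ 3 - 4 * c ^ 2 - 4 * c + 1 = 0 := by
    have h4 : Real.cos (4 * (Real.pi / 7)) = 2 * (2 * c ^ 2 - 1) ^ 2 - 1 := by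
      rw [show (4:ℝ) * (Real.pi / 7) = 2 * (2 * (Real.pi / 7)) by ring,
        Real.cos_two_mul, Real.cos_two_mul]
    have h3 : Real.cos (4 * (Real.pi / 7)) = -(4 * c ^ 3 - 3 * c) := by
      rw [show (4:ℝ) * (Real.pi / 7) = Real.pi - 3 * (Real.pi / 7) by ring,
        Real.cos_pi_sub, Real.cos_three_mul]
    have key : (c + 1) * (8 * c ^ 3 - 4 * c ^ 2 - 4 * c + 1) = 0 := by
      nlinarith [h4, h3]
    have hcne : c + 1 ≠ 0 := by linarith
    rcases mul_eq_zero.mp key with h | h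
    · exact absurd h hcne
    · exact h
  have hcube : lam ^ 3 - lam ^ 2 - 2 * lam + 1 = 0 := by
    rw [hlam]; linear_combination hccube
  -- Part 1 : M equals the explicit matrix
  have hMeq : M = !![-1 - 2 * lam ^ 2, 2 * lam ^ 2 + 3 * lam - 2; -lam, lam ^ 2 - 1] := by
    subst hA hC hM
    have : (!![-lam, 1; -1, 0] : Matrix (Fin 2) (Fin 2) ℝ) ^ 5 =
        (((!![-lam, 1; -1, 0] * !![-lam, 1; -1, 0]) * !![-lam, 1; -1, 0]) *
          !![-lam, 1; -1, 0]) * !![-lam, 1; -1, 0] := by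
      rw [pow_succ, pow_succ, pow_succ, pow_succ, pow_one]
    rw [this]
    ext i j
    fin_cases i <;> fin_cases j <;>
      simp [Matrix.mul_apply, Fin.sum_univ_two]
    · linear_combination (1 - 3 * lam - 3 * lam ^ 2) * hcube
    · linear_combination (3 + 3 * lam) * hcube
    · linear_combination (-1 - lam) * hcube
    · linear_combination hcube
  have e00 : M 0 0 = -1 - 2 * lam ^ 2 := by rw [hMeq]; rfl
  have e01 : M 0 1 = 2 * lam ^ 2 + 3 * lam - 2 := by rw [hMeq]; rfl
  have e10 : M 1 0 = -lam := by rw [hMeq]; rfl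
  have e11 : M 1 1 = lam ^ 2 - 1 := by rw [hMeq]; rfl
  -- trace
  have htr : Matrix.trace M = -(2 + lam ^ 2) := by
    rw [Matrix.trace_fin_two, e00, e11]; ring
  have habs : |Matrix.trace M| = 2 + lam ^ 2 := by
    rw [htr, abs_neg, abs_of_pos (by positivity)]
  -- discriminant
  have hD : 7 * lam ^ 2 + lam - 1 = (lam ^ 2 + 2 * lam - 2) ^ 2 := by
    linear_combination (-lam - 5) * hcube
  have hspos : 0 < lam ^ 2 + 2 * lam - 2 := by nlinarith
  have hsqrt : Real.sqrt (7 * lam ^ 2 + lam - 1) = lam ^ 2 + 2 * lam - 2 := by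
    rw [hD, Real.sqrt_sq (le_of_lt hspos)]
  have h2lam : (2 : ℝ) * lam ≠ 0 := by positivity
  -- fixed point set
  have hset : {z : ℝ | M 0 0 * z + M 0 1 = (M 1 0 * z + M 1 1) * z} =
      {(3 * lam ^ 2 + Real.sqrt (7 * lam ^ 2 + lam - 1)) / (2 * lam),
        (3 * lam ^ 2 - Real.sqrt (7 * lam ^ 2 + lam - 1)) / (2 * lam)} := by
    ext z
    simp only [Set.mem_setOf_eq, Set.mem_insert_iff, Set.mem_singleton_iff,
      e00, e01, e10, e11, hsqrt]
    constructor
    · intro h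
      have key : (2 * lam * z - (3 * lam ^ 2 + (lam ^ 2 + 2 * lam - 2))) *
          (2 * lam * z - (3 * lam ^ 2 - (lam ^ 2 + 2 * lam - 2))) = 0 := by
        linear_combination (4 * lam) * h + (8 * lam - 4) * hcube
      rcases mul_eq_zero.mp key with h1 | h1
      · left; rw [eq_div_iff h2lam]; linarith
      · right; rw [eq_div_iff h2lam]; linarith
    · intro h
      have key : (2 * lam * z - (3 * lam ^ 2 + (lam ^ 2 + 2 * lam - 2))) *
          (2 * lam * z - (3 * lam ^ 2 - (lam ^ 2 + 2 * lam - 2))) = 0 := by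
        rcases h with rfl | rfl
        · apply mul_eq_zero_of_left; field_simp; ring
        · apply mul_eq_zero_of_right; field_simp; ring
      have h4 : 4 * lam * ((-1 - 2 * lam ^ 2) * z + (2 * lam ^ 2 + 3 * lam - 2) -
          (-lam * z + (lam ^ 2 - 1)) * z) = 0 := by
        linear_combination key + (4 - 8 * lam) * hcube
      rcases mul_eq_zero.mp h4 with h5 | h5
      · nlinarith
      · linarith
  -- subfield membership
  have hKc : c ∈ Subfield.closure ({c} : Set ℝ) :=
    Subfield.subset_closure (Set.mem_singleton c)
  have hKlam : lam ∈ Subfield.closure ({c} : Set ℝ) := by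
    rw [hlam]
    exact Subfield.mul_mem _ (ofNat_mem _ 2) hKc
  have hK1 : ∀ s : ℝ, s = lam ^ 2 + 2 * lam - 2 →
      (3 * lam ^ 2 + s) / (2 * lam) ∈ Subfield.closure ({c} : Set ℝ) := by
    intro s hs
    rw [hs]
    apply Subfield.div_mem
    · apply Subfield.add_mem
      · exact Subfield.mul_mem _ (ofNat_mem _ 3) (Subfield.pow_mem _ hKlam 2)
      · apply Subfield.sub_mem
        · exact Subfield.add_mem _ (Subfield.pow_mem _ hKlam 2)
            (Subfield.mul_mem _ (ofNat_mem _ 2) hKlam)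
        · exact ofNat_mem _ 2
    · exact Subfield.mul_mem _ (ofNat_mem _ 2) hKlam
  have hK2 : ∀ s : ℝ, s = lam ^ 2 + 2 * lam - 2 →
      (3 * lam ^ 2 - s) / (2 * lam) ∈ Subfield.closure ({c} : Set ℝ) := by
    intro s hs
    rw [hs]
    apply Subfield.div_mem
    · apply Subfield.sub_mem
      · exact Subfield.mul_mem _ (ofNat_mem _ 3) (Subfield.pow_mem _ hKlam 2)
      · apply Subfield.sub_mem
        · exact Subfield.add_mem _ (Subfield.pow_mem _ hKlam 2)
            (Subfield.mul_mem _ (ofNat_mem _ 2) hKlam)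
        · exact ofNat_mem _ 2
    · exact Subfield.mul_mem _ (ofNat_mem _ 2) hKlam
  exact ⟨hMeq, habs, by rw [habs]; nlinarith, hset, hK1 _ hsqrt, hK2 _ hsqrt⟩
end
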